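/- arXiv:1811.05831 — 15 statements merged into one kernel-verified Lean document; each statement's English description precedes it below -/
import Mathlib

section
/- Let E be a real inner product space, let α > 0, and let Ω ⊆ E be an α-strongly convex set. Let p ∈ E be a nonzero vector and let x_p ∈ Ω satisfy ⟨p, x_p⟩ ≥ ⟨p, y⟩ for all y ∈ Ω. Then for every y ∈ Ω one has ⟨p, x_p − y⟩ ≥ (α‖p‖/2)·‖x_p − y‖². -/
open RealInnerProductSpace

/-- A set `Ω` in a real inner product space is `α`-strongly convex if for all `u, v ∈ Ω`
and all `θ ∈ [0,1]`, every point at distance at most `θ(1−θ)(α/2)‖u−v‖²` from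
`θ•u + (1−θ)•v` belongs to `Ω`. -/
def StronglyConvexSet {E : Type*} [NormedAddCommGroup E] [InnerProductSpace ℝ E]
    (α : ℝ) (Ω : Set E) : Prop :=
  ∀ u ∈ Ω, ∀ v ∈ Ω, ∀ θ : ℝ, θ ∈ Set.Icc (0 : ℝ) 1 → ∀ y : E,
    ‖y - (θ • u + (1 - θ) • v)‖ ≤ θ * (1 - θ) * (α / 2) * ‖u - v‖ ^ 2 → y ∈ Ω

/-- If `x_p` maximizes the linear functional `⟨p, ·⟩` over an `α`-strongly convex set `Ω`,
then for every `y ∈ Ω`, `⟨p, x_p − y⟩ ≥ (α‖p‖/2)·‖x_p − y‖²`. -/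
theorem strongly_convex_set_linear_opt_quadratic_gap
    {E : Type*} [NormedAddCommGroup E] [InnerProductSpace ℝ E]
    {α : ℝ} (hα : 0 < α) {Ω : Set E} (hΩ : StronglyConvexSet α Ω)
    {p : E} (hp : p ≠ 0) {xp : E} (hxp : xp ∈ Ω)
    (hopt : ∀ y ∈ Ω, ⟪p, y⟫ ≤ ⟪p, xp⟫) :
    ∀ y ∈ Ω, α * ‖p‖ / 2 * ‖xp - y‖ ^ 2 ≤ ⟪p, xp - y⟫ := by
  intro y hy
  have hpnorm : (0 : ℝ) < ‖p‖ := norm_pos_iff.mpr hp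
  set d : ℝ := ⟪p, xp - y⟫ with hd
  have hdval : d = ⟪p, xp⟫ - ⟪p, y⟫ := by rw [hd, inner_sub_right]
  have hd0 : 0 ≤ d := by
    have := hopt y hy
    rw [hdval]; linarith
  set K : ℝ := α * ‖p‖ / 2 * ‖xp - y‖ ^ 2 with hK
  -- key step: for every θ ∈ (0,1), (1-θ) * K ≤ d
  have key : ∀ θ : ℝ, 0 < θ → θ < 1 → θ * K ≤ d := by
    intro θ h0 h1
    set r : ℝ := θ * (1 - θ) * (α / 2) * ‖xp - y‖ ^ 2 with hr
    have hr0 : 0 ≤ r := by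
      have h1' : (0:ℝ) < 1 - θ := by linarith
      have : (0:ℝ) ≤ ‖xp - y‖ ^ 2 := sq_nonneg _
      rw [hr]; positivity
    set z : E := θ • xp + (1 - θ) • y + r • ‖p‖⁻¹ • p with hz
    have hzmem : z ∈ Ω := by
      apply hΩ xp hxp y hy θ ⟨le_of_lt h0, le_of_lt h1⟩
      have : z - (θ • xp + (1 - θ) • y) = r • ‖p‖⁻¹ • p := by rw [hz]; abel
      rw [this, norm_smul, norm_smul, norm_inv, norm_norm,
        inv_mul_cancel₀ (ne_of_gt hpnorm)]
      simp [abs_of_nonneg hr0]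
      exact le_of_eq hr
    have hinnerz : ⟪p, z⟫ = θ * ⟪p, xp⟫ + (1 - θ) * ⟪p, y⟫ + r * ‖p‖ := by
      rw [hz, inner_add_right, inner_add_right, real_inner_smul_right,
        real_inner_smul_right, real_inner_smul_right, real_inner_smul_right,
        real_inner_self_eq_norm_sq]
      field_simp
    have hle := hopt z hzmem
    rw [hinnerz] at hle
    have h2 : r * ‖p‖ ≤ (1 - θ) * d := by rw [hdval]; nlinarith
    have h3 : r * ‖p‖ = (1 - θ) * (θ * K) := by rw [hr, hK]; ring
    rw [h3] at h2
    have h1' : 0 < 1 - θ := by linarith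
    exact le_of_mul_le_mul_left (by linarith [h2] : (1 - θ) * (θ * K) ≤ (1 - θ) * d) h1' 
  by_contra hcon
  push_neg at hcon
  have hKpos : 0 < K := lt_of_le_of_lt hd0 hcon
  set θ : ℝ := (d / K + 1) / 2 with hθ
  have hdK : d / K < 1 := (div_lt_one hKpos).mpr hcon
  have hdK0 : 0 ≤ d / K := div_nonneg hd0 (le_of_lt hKpos)
  have h0 : 0 < θ := by rw [hθ]; linarith
  have h1 : θ < 1 := by rw [hθ]; linarith
  have hk := key θ h0 h1
  have heq : θ * K = (d + K) / 2 := by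
    rw [hθ]; field_simp
  rw [heq] at hk
  linarith
end

section
/- Let E be a real inner product space, let α > 0, and let Ω ⊆ E be an α-strongly convex set. Let u ∈ E with ‖u‖ = 1 and let x_u ∈ Ω satisfy ⟨u, x_u⟩ ≥ ⟨u, y⟩ for all y ∈ Ω. Then Ω is contained in the closed ball of radius 1/α centered at x_u − (1/α)u, i.e., ‖y − (x_u − (1/α)u)‖ ≤ 1/α for every y ∈ Ω. -/
open RealInnerProductSpace

/-- If `x_u` maximizes the linear functional `⟨u, ·⟩` (with `‖u‖ = 1`) over an `α`-strongly
convex set `Ω`, then `Ω` is contained in the closed ball of radius `1/α` centered at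
`x_u − (1/α)·u`. -/
theorem strongly_convex_set_subset_ball
    {E : Type*} [NormedAddCommGroup E] [InnerProductSpace ℝ E]
    {α : ℝ} (hα : 0 < α) {Ω : Set E} (hΩ : StronglyConvexSet α Ω)
    {u : E} (hu : ‖u‖ = 1) {xu : E} (hxu : xu ∈ Ω)
    (hopt : ∀ y ∈ Ω, ⟪u, y⟫ ≤ ⟪u, xu⟫) :
    ∀ y ∈ Ω, ‖y - (xu - (1 / α) • u)‖ ≤ 1 / α := by
  intro y hy
  have huu : ⟪u, u⟫ = 1 := by
    rw [real_inner_self_eq_norm_sq, hu]; ring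
  set c : ℝ := (α / 2) * ‖xu - y‖ ^ 2 with hc
  have hc0 : 0 ≤ c := by positivity
  -- key: for θ ∈ [0,1), ⟪u, y - xu⟫ ≤ -θ * c
  have key : ∀ θ : ℝ, 0 ≤ θ → θ < 1 → ⟪u, y⟫ - ⟪u, xu⟫ ≤ -θ * c := by
    intro θ h0 h1
    set t : ℝ := θ * (1 - θ) * (α / 2) * ‖xu - y‖ ^ 2 with ht
    have hz : (θ • xu + (1 - θ) • y + t • u) ∈ Ω := by
      apply hΩ xu hxu y hy θ ⟨h0, le_of_lt h1⟩
      have : θ • xu + (1 - θ) • y + t • u - (θ • xu + (1 - θ) • y) = t • u := by abel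
      rw [this, norm_smul, hu, mul_one, Real.norm_eq_abs, abs_of_nonneg]
      exact mul_nonneg (mul_nonneg (mul_nonneg h0 (by linarith)) (by positivity))
        (sq_nonneg _)
    have := hopt _ hz
    rw [inner_add_right, inner_add_right, inner_smul_right, inner_smul_right,
      inner_smul_right, huu] at this
    have h1' : 0 < 1 - θ := by linarith
    rw [ht, hc] at *
    nlinarith [mul_pos h1' hα, sq_nonneg (‖xu - y‖)]
  have hkey : ⟪u, y⟫ - ⟪u, xu⟫ ≤ -c := by
    rcases eq_or_lt_of_le hc0 with h | h
    · have := key 0 le_rfl one_pos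
      simpa [← h] using this
    · apply le_of_forall_pos_le_add
      intro ε hε
      rcases le_or_gt c ε with hce | hce
      · have := key 0 le_rfl one_pos
        simp at this
        linarith
      · have hθ0 : 0 ≤ 1 - ε / c := by
          have : ε / c ≤ 1 := (div_le_one h).2 hce.le
          linarith
        have hθ1 : 1 - ε / c < 1 := by
          have : 0 < ε / c := div_pos hε h
          linarith
        have := key _ hθ0 hθ1
        have hec : (ε / c) * c = ε := div_mul_cancel₀ ε h.ne'
        nlinarith
  -- now expand the norm
  have hinner : ⟪u, y - xu⟫ ≤ -c := by
    rw [inner_sub_right]; exact hkey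
  have hnn : ‖y - (xu - (1 / α) • u)‖ ^ 2 ≤ (1 / α) ^ 2 := by
    have hexp : y - (xu - (1 / α) • u) = (y - xu) + (1 / α) • u := by abel
    rw [hexp, norm_add_sq_real, real_inner_smul_right, norm_smul, hu, mul_one,
      Real.norm_eq_abs, abs_of_pos (by positivity : (0:ℝ) < 1/α)]
    have h1 : ⟪y - xu, u⟫ = ⟪u, y - xu⟫ := real_inner_comm _ _
    have hnorm : ‖xu - y‖ = ‖y - xu‖ := by rw [← neg_sub, norm_neg]
    rw [hnorm] at hc
    have hα' : (0:ℝ) < 1 / α := by positivity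
    rw [h1]
    have hmul : (1 / α) * ⟪u, y - xu⟫ ≤ (1 / α) * (-c) :=
      mul_le_mul_of_nonneg_left hinner hα'.le
    have hca : (1 / α) * α = 1 := one_div_mul_cancel hα.ne'
    nlinarith [hmul, hca, hc]
  have h0 : (0:ℝ) ≤ ‖y - (xu - (1 / α) • u)‖ := norm_nonneg _
  have hα' : (0:ℝ) ≤ 1 / α := by positivity
  exact (pow_le_pow_iff_left₀ h0 hα' two_ne_zero).mp hnn
end

section
/- Let E be a real inner product space, let α > 0, and let Ω ⊆ E be a nonempty compact α-strongly convex set. Let p, q ∈ E be nonzero vectors and let x_p, x_q ∈ Ω satisfy ⟨p, x_p⟩ ≥ ⟨p, y⟩ and ⟨q, x_q⟩ ≥ ⟨q, y⟩ for all y ∈ Ω. Then ‖x_p − x_q‖ ≤ 2‖p − q‖ / (α(‖p‖ + ‖q‖)). -/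
open RealInnerProductSpace

lemma key_oracle {E : Type*} [NormedAddCommGroup E] [InnerProductSpace ℝ E]
    {α : ℝ} (hα : 0 < α) {Ω : Set E} (hΩ : StronglyConvexSet α Ω)
    {p : E} (hp : p ≠ 0) {xp : E} (hxp : xp ∈ Ω)
    (hoptp : ∀ y ∈ Ω, ⟪p, y⟫ ≤ ⟪p, xp⟫) {y : E} (hy : y ∈ Ω) :
    (α / 2) * ‖p‖ * ‖xp - y‖ ^ 2 ≤ ⟪p, xp - y⟫ := by
  have hpn : 0 < ‖p‖ := norm_pos_iff.2 hp
  set C : ℝ := (α / 2) * ‖p‖ * ‖xp - y‖ ^ 2 with hCdef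
  set L : ℝ := ⟪p, xp - y⟫ with hLdef
  have step : ∀ θ : ℝ, 0 ≤ θ → θ < 1 → θ * C ≤ L := by
    intro θ h0 h1
    set r : ℝ := θ * (1 - θ) * (α / 2) * ‖xp - y‖ ^ 2 with hrdef
    have hr0 : 0 ≤ r := by
      have := sq_nonneg ‖xp - y‖
      have h1' : 0 ≤ 1 - θ := by linarith
      positivity
    set z : E := θ • xp + (1 - θ) • y + (r / ‖p‖) • p with hzdef
    have hz : z ∈ Ω := by
      refine hΩ xp hxp y hy θ ⟨h0, h1.le⟩ z ?_
      have hz1 : z - (θ • xp + (1 - θ) • y) = (r / ‖p‖) • p := by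
        rw [hzdef]; abel
      rw [hz1, norm_smul, Real.norm_eq_abs, abs_of_nonneg (div_nonneg hr0 hpn.le)]
      rw [div_mul_cancel₀ _ hpn.ne']
    have hineq := hoptp z hz
    have hexp : ⟪p, z⟫ = θ * ⟪p, xp⟫ + (1 - θ) * ⟪p, y⟫ + r / ‖p‖ * (‖p‖ ^ 2) := by
      rw [hzdef]
      simp [inner_add_right, inner_smul_right, real_inner_self_eq_norm_sq]
    rw [hexp] at hineq
    have hL' : L = ⟪p, xp⟫ - ⟪p, y⟫ := by rw [hLdef, inner_sub_right]
    have hfrac : r / ‖p‖ * ‖p‖ ^ 2 = r * ‖p‖ := by field_simp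
    rw [hfrac] at hineq
    have h1' : 0 < 1 - θ := by linarith
    -- hineq : θ*⟪p,xp⟫ + (1-θ)*⟪p,y⟫ + r*‖p‖ ≤ ⟪p,xp⟫
    -- i.e. r*‖p‖ ≤ (1-θ)*L; r*‖p‖ = (1-θ)*θ*C
    have hrC : r * ‖p‖ = (1 - θ) * (θ * C) := by rw [hrdef, hCdef]; ring
    nlinarith [mul_pos h1' hpn]
  have hL0 : 0 ≤ L := by simpa using step 0 le_rfl one_pos
  by_contra hcon
  push_neg at hcon
  have hC0 : 0 < C := lt_of_le_of_lt hL0 hcon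
  have hstep := step ((L + C) / (2 * C)) (by positivity)
    (by rw [div_lt_one (by positivity)]; linarith)
  have : (L + C) / (2 * C) * C = (L + C) / 2 := by field_simp
  rw [this] at hstep
  linarith

/-- Lipschitz continuity of the linear optimization (Frank–Wolfe) oracle over a nonempty
compact `α`-strongly convex set: if `x_p` and `x_q` maximize `⟨p, ·⟩` and `⟨q, ·⟩` over `Ω`
respectively, then `‖x_p − x_q‖ ≤ 2‖p − q‖ / (α(‖p‖ + ‖q‖))`. -/
theorem strongly_convex_set_oracle_lipschitz
    {E : Type*} [NormedAddCommGroup E] [InnerProductSpace ℝ E]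
    {α : ℝ} (hα : 0 < α) {Ω : Set E} (hne : Ω.Nonempty) (hcomp : IsCompact Ω)
    (hΩ : StronglyConvexSet α Ω)
    {p q : E} (hp : p ≠ 0) (hq : q ≠ 0)
    {xp xq : E} (hxp : xp ∈ Ω) (hxq : xq ∈ Ω)
    (hoptp : ∀ y ∈ Ω, ⟪p, y⟫ ≤ ⟪p, xp⟫)
    (hoptq : ∀ y ∈ Ω, ⟪q, y⟫ ≤ ⟪q, xq⟫) :
    ‖xp - xq‖ ≤ 2 * ‖p - q‖ / (α * (‖p‖ + ‖q‖)) := by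
  have hpn : 0 < ‖p‖ := norm_pos_iff.2 hp
  have hqn : 0 < ‖q‖ := norm_pos_iff.2 hq
  have h1 := key_oracle hα hΩ hp hxp hoptp hxq
  have h2 := key_oracle hα hΩ hq hxq hoptq hxp
  have hnorm : ‖xq - xp‖ = ‖xp - xq‖ := norm_sub_rev _ _
  rw [hnorm] at h2
  have hq' : ⟪q, xq - xp⟫ = -⟪q, xp - xq⟫ := by
    rw [← inner_neg_right]; congr 1; abel
  rw [hq'] at h2
  have hcs : ⟪p - q, xp - xq⟫ ≤ ‖p - q‖ * ‖xp - xq‖ := real_inner_le_norm _ _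
  have hsplit : ⟪p - q, xp - xq⟫ = ⟪p, xp - xq⟫ - ⟪q, xp - xq⟫ := inner_sub_left _ _ _
  rw [hsplit] at hcs
  have hden : 0 < α * (‖p‖ + ‖q‖) := by positivity
  rw [le_div_iff₀ hden]
  rcases eq_or_ne xp xq with h | h
  · simp [h]
  · have hd : 0 < ‖xp - xq‖ := by
      rw [norm_pos_iff, sub_ne_zero]; exact h
    nlinarith [mul_pos hd hd]
end

section
/- Let E be a real inner product space and let f : E → ℝ be convex, differentiable with gradient ∇f, and L-smooth (L ≥ 0). Let γ ∈ [0,1], let w, v, v' ∈ E, and set z = (1−γ)w + γv and w' = (1−γ)w + γv'. Then f(w') ≤ (1−γ)·f(w) + γ·( f(z) + ⟨∇f(z), v' − z⟩ ) + (Lγ²/2)·‖v' − v‖². -/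
open RealInnerProductSpace

/-- Support line inequality for a convex differentiable function. -/
lemma convex_support_line
    {E : Type*} [NormedAddCommGroup E] [InnerProductSpace ℝ E]
    (f : E → ℝ) (f' : E → E)
    (hconv : ConvexOn ℝ Set.univ f)
    (hdiff : ∀ x : E, HasFDerivAt f (innerSL ℝ (f' x)) x) (a b : E) :
    f a + ⟪f' a, b - a⟫ ≤ f b := by
  set c : ℝ →ᵃ[ℝ] E := AffineMap.lineMap a b with hc
  have hg : ConvexOn ℝ (c ⁻¹' Set.univ) (f ∘ c) := hconv.comp_affineMap c
  rw [Set.preimage_univ] at hg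
  have hcd : HasDerivAt (fun t : ℝ => c t) (b - a) 0 := by
    simp only [hc, AffineMap.lineMap_apply, vsub_eq_sub, vadd_eq_add]
    simpa using ((hasDerivAt_id (0:ℝ)).smul_const (b - a)).add_const a
  have hgd : HasDerivAt (f ∘ c) ⟪f' a, b - a⟫ 0 := by
    have := (hdiff (c 0)).comp_hasDerivAt 0 hcd
    simpa [hc, AffineMap.lineMap_apply] using this
  have hslope := hg.le_slope_of_hasDerivAt (Set.mem_univ (0:ℝ)) (Set.mem_univ (1:ℝ))
    one_pos hgd
  have h0 : c (0:ℝ) = a := by simp [hc]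
  have h1 : c (1:ℝ) = b := by simp [hc]
  rw [slope_def_field] at hslope
  simp only [Function.comp_apply, h0, h1] at hslope
  have : ⟪f' a, b - a⟫ ≤ f b - f a := by
    calc ⟪f' a, b - a⟫ ≤ (f b - f a) / (1 - 0) := hslope
    _ = f b - f a := by ring
  linarith

/-- One-step smoothness–convexity inequality: for a convex `L`-smooth `f` with gradient `f'`,
with `z = (1−γ)w + γv` and `w' = (1−γ)w + γv'`,
`f(w') ≤ (1−γ)f(w) + γ(f(z) + ⟪∇f(z), v' − z⟫) + (Lγ²/2)‖v' − v‖²`. -/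
theorem smooth_convex_one_step_inequality
    {E : Type*} [NormedAddCommGroup E] [InnerProductSpace ℝ E]
    (f : E → ℝ) (f' : E → E) {L : ℝ} (hL : 0 ≤ L)
    (hconv : ConvexOn ℝ Set.univ f)
    (hdiff : ∀ x : E, HasFDerivAt f (innerSL ℝ (f' x)) x)
    (hsmooth : ∀ x y : E, |f x - f y - ⟪f' y, x - y⟫| ≤ L / 2 * ‖x - y‖ ^ 2)
    {γ : ℝ} (hγ : γ ∈ Set.Icc (0 : ℝ) 1) (w v v' z w' : E)
    (hz : z = (1 - γ) • w + γ • v) (hw' : w' = (1 - γ) • w + γ • v') :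
    f w' ≤ (1 - γ) * f w + γ * (f z + ⟪f' z, v' - z⟫) + L * γ ^ 2 / 2 * ‖v' - v‖ ^ 2 := by
  obtain ⟨hγ0, hγ1⟩ := hγ
  have hwz : w' - z = γ • (v' - v) := by
    rw [hw', hz]; module
  -- smoothness step
  have hs : f w' - f z - ⟪f' z, w' - z⟫ ≤ L / 2 * ‖w' - z‖ ^ 2 :=
    (abs_le.mp (hsmooth w' z)).2
  have hnorm : ‖w' - z‖ ^ 2 = γ ^ 2 * ‖v' - v‖ ^ 2 := by
    rw [hwz, norm_smul]
    simp [mul_pow, abs_of_nonneg hγ0]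
  have hin : ⟪f' z, w' - z⟫ = γ * ⟪f' z, v' - v⟫ := by
    rw [hwz, real_inner_smul_right]
  -- support line step
  have hsl : f z + ⟪f' z, w - z⟫ ≤ f w := convex_support_line f f' hconv hdiff z w
  have hwz2 : w - z = (-γ) • (v - w) := by rw [hz]; module
  have hin2 : ⟪f' z, w - z⟫ = -γ * ⟪f' z, v - w⟫ := by
    rw [hwz2, real_inner_smul_right]
  -- relate v' - z : v' - z = (v' - v) + (1-γ) • (v - w)
  have hvz : v' - z = (v' - v) + (1 - γ) • (v - w) := by rw [hz]; module
  have hin3 : ⟪f' z, v' - z⟫ = ⟪f' z, v' - v⟫ + (1 - γ) * ⟪f' z, v - w⟫ := by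
    rw [hvz, inner_add_right, real_inner_smul_right]
  have hmul : (1 - γ) * (f z + -γ * ⟪f' z, v - w⟫) ≤ (1 - γ) * f w := by
    apply mul_le_mul_of_nonneg_left _ (by linarith)
    rw [← hin2]; exact hsl
  nlinarith [hs, hnorm, hin, hmul, hin3]
end

section
/- Let E be a real inner product space, Ω ⊆ E a convex set, and f : E → ℝ convex, differentiable with gradient ∇f, and L-smooth (L ≥ 0). Let γ ∈ [0,1], let w, v ∈ Ω, set z = (1−γ)w + γv, let v' ∈ Ω satisfy ⟨∇f(z), v'⟩ ≤ ⟨∇f(z), u⟩ for all u ∈ Ω, and set w' = (1−γ)w + γv'. Then for every w* ∈ Ω, f(w') ≤ (1−γ)·f(w) + γ·f(w*) + (Lγ²/2)·‖v' − v‖². -/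
open RealInnerProductSpace

/-- Per-iteration recursion of Primal Averaging with option (B): with `z = (1−γ)w + γv`,
`v'` the output of the linear oracle in direction `∇f(z)`, and `w' = (1−γ)w + γv'`,
for every `w* ∈ Ω`, `f(w') ≤ (1−γ)f(w) + γf(w*) + (Lγ²/2)‖v' − v‖²`. -/
theorem primal_averaging_one_step_recursion
    {E : Type*} [NormedAddCommGroup E] [InnerProductSpace ℝ E]
    {Ω : Set E} (hΩ : Convex ℝ Ω)
    (f : E → ℝ) (f' : E → E) {L : ℝ} (hL : 0 ≤ L)
    (hconv : ConvexOn ℝ Set.univ f)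
    (hdiff : ∀ x : E, HasFDerivAt f (innerSL ℝ (f' x)) x)
    (hsmooth : ∀ x y : E, |f x - f y - ⟪f' y, x - y⟫| ≤ L / 2 * ‖x - y‖ ^ 2)
    {γ : ℝ} (hγ : γ ∈ Set.Icc (0 : ℝ) 1)
    {w v : E} (hw : w ∈ Ω) (hv : v ∈ Ω) (z : E) (hz : z = (1 - γ) • w + γ • v)
    {v' : E} (hv' : v' ∈ Ω)
    (horacle : ∀ u ∈ Ω, ⟪f' z, v'⟫ ≤ ⟪f' z, u⟫)
    (w' : E) (hw' : w' = (1 - γ) • w + γ • v') :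
    ∀ wstar ∈ Ω,
      f w' ≤ (1 - γ) * f w + γ * f wstar + L * γ ^ 2 / 2 * ‖v' - v‖ ^ 2 := by
  intro wstar hwstar
  obtain ⟨hγ0, hγ1⟩ := hγ
  -- gradient inequality from convexity and smoothness
  have hgrad : ∀ x y : E, f y + ⟪f' y, x - y⟫ ≤ f x := by
    intro x y
    have key : ∀ t : ℝ, 0 < t → t ≤ 1 →
        ⟪f' y, x - y⟫ ≤ f x - f y + L / 2 * t * ‖x - y‖ ^ 2 := by
      intro t ht ht1
      have hc := hconv.2 (Set.mem_univ y) (Set.mem_univ x)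
        (by linarith : (0:ℝ) ≤ 1 - t) ht.le (by ring)
      have hs := hsmooth ((1 - t) • y + t • x) y
      have heq : (1 - t) • y + t • x - y = t • (x - y) := by
        module
      rw [heq, real_inner_smul_right, norm_smul, mul_pow] at hs
      have h1 := (abs_le.1 hs).1
      have hN : (0:ℝ) ≤ ‖x - y‖ ^ 2 := by positivity
      have habs : |t| = t := abs_of_pos ht
      rw [Real.norm_eq_abs, habs] at h1
      simp only [smul_eq_mul] at hc
      have hdiv : t * ⟪f' y, x - y⟫ ≤ t * (f x - f y + L / 2 * t * ‖x - y‖ ^ 2) := by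
        nlinarith
      exact le_of_mul_le_mul_left hdiv ht
    have hN : (0:ℝ) ≤ ‖x - y‖ ^ 2 := by positivity
    set D := L / 2 * ‖x - y‖ ^ 2 with hD
    have hDnn : 0 ≤ D := by positivity
    have : ⟪f' y, x - y⟫ ≤ f x - f y := by
      refine le_of_forall_pos_le_add fun ε hε => ?_
      rcases eq_or_lt_of_le hDnn with hD0 | hDpos
      · have := key 1 one_pos le_rfl
        calc ⟪f' y, x - y⟫ ≤ f x - f y + L / 2 * 1 * ‖x - y‖ ^ 2 := this
          _ = f x - f y + D := by rw [hD]; ring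
          _ ≤ f x - f y + ε := by rw [← hD0]; linarith
      · set t := min 1 (ε / D) with htdef
        have ht0 : 0 < t := lt_min one_pos (div_pos hε hDpos)
        have ht1 : t ≤ 1 := min_le_left _ _
        have := key t ht0 ht1
        have htD : t * D ≤ ε := by
          have : t ≤ ε / D := min_le_right _ _
          calc t * D ≤ (ε / D) * D := by nlinarith
            _ = ε := div_mul_cancel₀ _ (ne_of_gt hDpos)
        calc ⟪f' y, x - y⟫ ≤ f x - f y + L / 2 * t * ‖x - y‖ ^ 2 := this
          _ = f x - f y + t * D := by rw [hD]; ring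
          _ ≤ f x - f y + ε := by linarith
    linarith
  set g := f' z with hg
  -- smoothness at w' vs z
  have hwz : w' - z = γ • (v' - v) := by
    rw [hw', hz]; module
  have hs := hsmooth w' z
  rw [hwz, real_inner_smul_right, norm_smul, mul_pow] at hs
  have habs : |γ| = γ := abs_of_nonneg hγ0
  rw [Real.norm_eq_abs, habs] at hs
  have h1 := (abs_le.1 hs).2
  -- f w' ≤ f z + γ * ⟪g, v' - v⟫ + L/2 * γ^2 * ‖v'-v‖^2
  have hor := horacle wstar hwstar
  -- gradient inequalities
  have hg1 := hgrad w z
  have hg2 := hgrad wstar z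
  -- rewrite inner products at z in scalar form
  have hzin : ∀ u : E, ⟪g, u - z⟫ = ⟪g, u⟫ - (1 - γ) * ⟪g, w⟫ - γ * ⟪g, v⟫ := by
    intro u
    rw [inner_sub_right, hz, inner_add_right, real_inner_smul_right, real_inner_smul_right]
    ring
  have hvv : ⟪g, v' - v⟫ = ⟪g, v'⟫ - ⟪g, v⟫ := inner_sub_right _ _ _
  rw [hzin w] at hg1
  rw [hzin wstar] at hg2
  rw [hvv] at h1
  nlinarith [sq_nonneg γ, norm_nonneg (v' - v), sq_nonneg ‖v' - v‖]
end

section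
/- Let L ≥ 0 and let (a_t)_{t ≥ 0} and (b_t)_{t ≥ 1} be real sequences with b_t ≥ 0 for all t ≥ 1. Suppose that for every t ≥ 1, a_t ≤ (1 − 2/(t+1))·a_{t−1} + (2L/(t+1)²)·b_t. Then for every t ≥ 1, a_t ≤ (2L/(t(t+1)))·Σ_{i=1}^{t} b_i. -/
/-- Telescoping estimate for Frank–Wolfe-type recursions with step sizes `γ_t = 2/(t+1)`:
if `a_t ≤ (1 − 2/(t+1))·a_{t−1} + (2L/(t+1)²)·b_t` for all `t ≥ 1` with `b_t ≥ 0`, then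
`a_t ≤ (2L/(t(t+1)))·Σ_{i=1}^{t} b_i` for all `t ≥ 1`. -/
theorem frank_wolfe_telescoping
    {L : ℝ} (hL : 0 ≤ L) (a b : ℕ → ℝ)
    (hb : ∀ t : ℕ, 1 ≤ t → 0 ≤ b t)
    (hrec : ∀ t : ℕ, 1 ≤ t →
      a t ≤ (1 - 2 / ((t : ℝ) + 1)) * a (t - 1) + 2 * L / ((t : ℝ) + 1) ^ 2 * b t) :
    ∀ t : ℕ, 1 ≤ t →
      a t ≤ 2 * L / ((t : ℝ) * ((t : ℝ) + 1)) * ∑ i ∈ Finset.Icc 1 t, b i := by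
  intro t ht
  induction t with
  | zero => omega
  | succ n ih =>
    rcases Nat.eq_or_lt_of_le ht with h1 | h1
    · -- n = 0, t = 1
      have hn : n = 0 := by omega
      subst hn
      have h := hrec 1 le_rfl
      simp only [Finset.Icc_self, Finset.sum_singleton]
      have hb1 := hb 1 le_rfl
      push_cast at h ⊢
      nlinarith [h]
    · have hn : 1 ≤ n := by omega
      have ihn := ih hn
      have h := hrec (n + 1) (by omega)
      have hsimp : (n + 1) - 1 = n := by omega
      rw [hsimp] at h
      push_cast at h ⊢
      have hnpos : (0:ℝ) < n := by exact_mod_cast hn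
      have hsum : ∑ i ∈ Finset.Icc 1 (n+1), b i = (∑ i ∈ Finset.Icc 1 n, b i) + b (n+1) := by
        rw [Finset.sum_Icc_succ_top (by omega)]
      rw [hsum]
      have hbn := hb (n+1) (by omega)
      push_cast at hbn
      have hSnn : 0 ≤ ∑ i ∈ Finset.Icc 1 n, b i :=
        Finset.sum_nonneg fun i hi => hb i (Finset.mem_Icc.mp hi).1
      have key1 : (1 - 2 / ((n:ℝ) + 1 + 1)) * a n ≤
          (1 - 2 / ((n:ℝ) + 1 + 1)) * (2 * L / ((n:ℝ) * ((n:ℝ) + 1)) * ∑ i ∈ Finset.Icc 1 n, b i) := by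
        apply mul_le_mul_of_nonneg_left ihn
        have : (2:ℝ) / ((n:ℝ) + 1 + 1) ≤ 1 := by
          rw [div_le_one (by linarith)]; linarith
        linarith
      have heq : (1 - 2 / ((n:ℝ) + 1 + 1)) * (2 * L / ((n:ℝ) * ((n:ℝ) + 1)) * ∑ i ∈ Finset.Icc 1 n, b i)
          = 2 * L / (((n:ℝ)+1) * ((n:ℝ)+1+1)) * ∑ i ∈ Finset.Icc 1 n, b i := by
        field_simp
        ring
      have key2 : 2 * L / ((n:ℝ) + 1 + 1) ^ 2 * b (n+1) ≤
          2 * L / (((n:ℝ)+1) * ((n:ℝ)+1+1)) * b (n+1) := by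
        apply mul_le_mul_of_nonneg_right _ hbn
        apply div_le_div_of_nonneg_left (by linarith) (by positivity)
        nlinarith
      calc a (n+1) ≤ _ := h
        _ ≤ 2 * L / (((n:ℝ)+1) * ((n:ℝ)+1+1)) * ∑ i ∈ Finset.Icc 1 n, b i
            + 2 * L / (((n:ℝ)+1) * ((n:ℝ)+1+1)) * b (n+1) := by
              rw [← heq]; exact add_le_add key1 key2
        _ = 2 * L / (((n:ℝ)+1) * ((n:ℝ)+1+1)) * ((∑ i ∈ Finset.Icc 1 n, b i) + b (n+1)) := by ring
end

section
/- Let E be a real inner product space, Ω ⊆ E a nonempty convex set, and f : E → ℝ convex, differentiable with gradient ∇f, and L-smooth (L ≥ 0). Define sequences by: w_0 = v_0 ∈ Ω; for t ≥ 1, γ_t = 2/(t+1), z_{t−1} = (1−γ_t)w_{t−1} + γ_t v_{t−1}, v_t ∈ Ω with ⟨∇f(z_{t−1}), v_t⟩ ≤ ⟨∇f(z_{t−1}), u⟩ for all u ∈ Ω, and w_t = (1−γ_t)w_{t−1} + γ_t v_t. Then for every w* ∈ Ω and every t ≥ 1, f(w_t) − f(w*) ≤ (2L/(t(t+1)))·Σ_{i=1}^{t}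 ‖v_i − v_{i−1}‖². -/
open RealInnerProductSpace Filter Topology

set_option maxHeartbeats 1000000

lemma grad_ineq {E : Type*} [NormedAddCommGroup E] [InnerProductSpace ℝ E]
    {f : E → ℝ} {φ : E →L[ℝ] ℝ} (hconv : ConvexOn ℝ Set.univ f)
    {x : E} (hd : HasFDerivAt f φ x) (y : E) : f x + φ (y - x) ≤ f y := by
  have hcurve : HasDerivAt (fun θ : ℝ => x + θ • (y - x)) (y - x) 0 := by
    simpa using ((hasDerivAt_id (0:ℝ)).smul_const (y - x)).const_add x
  have hg : HasDerivAt (fun θ : ℝ => f (x + θ • (y - x))) (φ (y - x)) 0 := by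
    have hd' : HasFDerivAt f φ (x + (0:ℝ) • (y - x)) := by simpa using hd
    exact hd'.comp_hasDerivAt 0 hcurve
  have htend := hasDerivAt_iff_tendsto_slope.1 hg
  have htend' : Tendsto (slope (fun θ : ℝ => f (x + θ • (y - x))) 0) (𝓝[>] 0)
      (𝓝 (φ (y - x))) := htend.mono_left (nhdsWithin_mono _ (fun a ha => ne_of_gt ha))
  have key : φ (y - x) ≤ f y - f x := by
    refine le_of_tendsto htend' ?_
    filter_upwards [Ioo_mem_nhdsGT_of_mem (by norm_num : (0:ℝ) ∈ Set.Ico 0 1)] with θ hθ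
    obtain ⟨hθ0, hθ1⟩ := hθ
    have hconvθ := hconv.2 (Set.mem_univ x) (Set.mem_univ y)
      (by linarith : (0:ℝ) ≤ 1 - θ) hθ0.le (by ring)
    have heq : x + θ • (y - x) = (1 - θ) • x + θ • y := by
      simp [smul_sub, sub_smul]; abel
    have hfle : f (x + θ • (y - x)) ≤ (1 - θ) * f x + θ * f y := by
      rw [heq]; simpa using hconvθ
    have : slope (fun θ : ℝ => f (x + θ • (y - x))) 0 θ
        = (f (x + θ • (y - x)) - f x) / θ := by
      rw [slope_def_field]; simp [div_sub_div_same]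
    rw [this, div_le_iff₀ hθ0]
    nlinarith
  linarith

/-- Convergence bound for Primal Averaging with option (B) (`p_t = ∇f(z_{t−1})`) and step
sizes `γ_t = 2/(t+1)`: for every `w* ∈ Ω` and `t ≥ 1`,
`f(w_t) − f(w*) ≤ (2L/(t(t+1)))·Σ_{i=1}^{t} ‖v_i − v_{i−1}‖²`. -/
theorem primal_averaging_optionB_rate
    {E : Type*} [NormedAddCommGroup E] [InnerProductSpace ℝ E]
    {Ω : Set E} (hne : Ω.Nonempty) (hΩ : Convex ℝ Ω)
    (f : E → ℝ) (f' : E → E) {L : ℝ} (hL : 0 ≤ L)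
    (hconv : ConvexOn ℝ Set.univ f)
    (hdiff : ∀ x : E, HasFDerivAt f (innerSL ℝ (f' x)) x)
    (hsmooth : ∀ x y : E, |f x - f y - ⟪f' y, x - y⟫| ≤ L / 2 * ‖x - y‖ ^ 2)
    (w v z : ℕ → E)
    (hw0 : w 0 = v 0) (hv0 : v 0 ∈ Ω)
    (hz : ∀ t : ℕ, 1 ≤ t →
      z (t - 1) = (1 - 2 / ((t : ℝ) + 1)) • w (t - 1) + (2 / ((t : ℝ) + 1)) • v (t - 1))
    (hvmem : ∀ t : ℕ, 1 ≤ t → v t ∈ Ω)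
    (horacle : ∀ t : ℕ, 1 ≤ t → ∀ u ∈ Ω,
      ⟪f' (z (t - 1)), v t⟫ ≤ ⟪f' (z (t - 1)), u⟫)
    (hw : ∀ t : ℕ, 1 ≤ t →
      w t = (1 - 2 / ((t : ℝ) + 1)) • w (t - 1) + (2 / ((t : ℝ) + 1)) • v t) :
    ∀ wstar ∈ Ω, ∀ t : ℕ, 1 ≤ t →
      f (w t) - f wstar ≤
        2 * L / ((t : ℝ) * ((t : ℝ) + 1)) * ∑ i ∈ Finset.Icc 1 t, ‖v i - v (i - 1)‖ ^ 2 := by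
  intro wstar hwstar t ht
  -- one-step descent inequality
  have step : ∀ s : ℕ, 1 ≤ s →
      f (w s) ≤ (1 - 2/((s:ℝ)+1)) * f (w (s-1)) + (2/((s:ℝ)+1)) * f wstar
        + L/2 * (2/((s:ℝ)+1))^2 * ‖v s - v (s-1)‖^2 := by
    intro s hs
    have hS1 : (1:ℝ) ≤ (s:ℝ) := by exact_mod_cast hs
    have hws := hw s hs
    have hzs := hz s hs
    set γ : ℝ := 2/((s:ℝ)+1) with hγdef
    have hγpos : 0 < γ := by positivity
    have hγle : γ ≤ 1 := by
      rw [hγdef, div_le_one (by linarith)]; linarith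
    set g := f' (z (s-1)) with hgdef
    have hvec1 : w s - z (s-1) = γ • (v s - v (s-1)) := by
      rw [hws, hzs]; module
    have hvec2 : w s - z (s-1) = (1-γ) • (w (s-1) - z (s-1)) + γ • (v s - z (s-1)) := by
      rw [hws, hzs]; module
    have hsm' : f (w s) ≤ f (z (s-1)) + ⟪g, w s - z (s-1)⟫ + L/2 * ‖w s - z (s-1)‖^2 := by
      have := abs_le.1 (hsmooth (w s) (z (s-1)))
      linarith [this.2]
    have hnorm : ‖w s - z (s-1)‖^2 = γ^2 * ‖v s - v (s-1)‖^2 := by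
      rw [hvec1, norm_smul]
      simp [abs_of_pos hγpos]
      ring
    have hinner : ⟪g, w s - z (s-1)⟫
        = (1-γ) * ⟪g, w (s-1) - z (s-1)⟫ + γ * ⟪g, v s - z (s-1)⟫ := by
      rw [hvec2, inner_add_right, real_inner_smul_right, real_inner_smul_right]
    have hA : f (z (s-1)) + ⟪g, w (s-1) - z (s-1)⟫ ≤ f (w (s-1)) := by
      simpa using grad_ineq hconv (hdiff (z (s-1))) (w (s-1))
    have hB : f (z (s-1)) + ⟪g, v s - z (s-1)⟫ ≤ f wstar := by
      have h1 : f (z (s-1)) + ⟪g, wstar - z (s-1)⟫ ≤ f wstar := by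
        simpa using grad_ineq hconv (hdiff (z (s-1))) wstar
      have h2 := horacle s hs wstar hwstar
      have h3 : ⟪g, v s - z (s-1)⟫ ≤ ⟪g, wstar - z (s-1)⟫ := by
        rw [inner_sub_right, inner_sub_right]
        linarith
      linarith
    have h1 := mul_le_mul_of_nonneg_left hA (by linarith : (0:ℝ) ≤ 1-γ)
    have h2 := mul_le_mul_of_nonneg_left hB hγpos.le
    rw [hinner, hnorm] at hsm'
    nlinarith [h1, h2, hsm']
  -- multiplied one-step inequality
  have step' : ∀ s : ℕ, 1 ≤ s →
      (s:ℝ)*((s:ℝ)+1)/2 * (f (w s) - f wstar)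
        ≤ (s:ℝ)*((s:ℝ)-1)/2 * (f (w (s-1)) - f wstar) + L * ‖v s - v (s-1)‖^2 := by
    intro s hs
    have hS1 : (1:ℝ) ≤ (s:ℝ) := by exact_mod_cast hs
    have hSpos : (0:ℝ) < (s:ℝ)+1 := by linarith
    have hc : (0:ℝ) ≤ (s:ℝ)*((s:ℝ)+1)/2 := by positivity
    have hm := mul_le_mul_of_nonneg_left (step s hs) hc
    set A := f (w (s-1)); set B := f wstar; set D := ‖v s - v (s-1)‖^2 with hDdef
    have hD : (0:ℝ) ≤ D := by rw [hDdef]; positivity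
    have hId : (s:ℝ)*((s:ℝ)+1)/2 * ((1 - 2/((s:ℝ)+1)) * A + (2/((s:ℝ)+1)) * B
        + L/2 * (2/((s:ℝ)+1))^2 * D)
        = (s:ℝ)*((s:ℝ)-1)/2 * A + (s:ℝ) * B + (L*(s:ℝ)/((s:ℝ)+1)) * D := by
      field_simp
      ring
    rw [hId] at hm
    have htail : (L*(s:ℝ)/((s:ℝ)+1)) * D ≤ L * D := by
      have h1 : L*(s:ℝ)/((s:ℝ)+1) ≤ L := by
        rw [div_le_iff₀ hSpos]; nlinarith
      exact mul_le_mul_of_nonneg_right h1 hD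
    nlinarith [hm, htail]
  -- induction
  have main : ∀ s : ℕ, 1 ≤ s →
      (s:ℝ)*((s:ℝ)+1)/2 * (f (w s) - f wstar)
        ≤ L * ∑ i ∈ Finset.Icc 1 s, ‖v i - v (i - 1)‖ ^ 2 := by
    intro s hs
    induction s, hs using Nat.le_induction with
    | base =>
      have h := step' 1 le_rfl
      norm_num at h ⊢
      nlinarith [h, norm_nonneg (v 1 - v 0), hL, sq_nonneg ‖v 1 - v 0‖]
    | succ n hn ih =>
      have h := step' (n+1) (by omega)
      simp only [Nat.add_sub_cancel] at h
      rw [Finset.sum_Icc_succ_top (by omega : 1 ≤ n+1)]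
      simp only [Nat.add_sub_cancel] at ih ⊢
      push_cast at h ⊢
      linarith [h, ih]
  have h := main t ht
  have hT1 : (1:ℝ) ≤ (t:ℝ) := by exact_mod_cast ht
  have hc : (0:ℝ) < (t:ℝ)*((t:ℝ)+1)/2 := by nlinarith
  rw [← mul_le_mul_iff_right₀ hc]
  have heq : (t:ℝ)*((t:ℝ)+1)/2 * (2 * L / ((t : ℝ) * ((t : ℝ) + 1))
      * ∑ i ∈ Finset.Icc 1 t, ‖v i - v (i - 1)‖ ^ 2)
      = L * ∑ i ∈ Finset.Icc 1 t, ‖v i - v (i - 1)‖ ^ 2 := by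
    have h1 : (t:ℝ) ≠ 0 := by linarith
    have h2 : (t:ℝ)+1 ≠ 0 := by linarith
    rw [← mul_assoc]
    congr 1
    field_simp
  rw [heq]
  exact h
end

section
/- Let E be a real inner product space, Ω ⊆ E a nonempty convex set, and f : E → ℝ convex, differentiable with gradient ∇f, and L-smooth (L ≥ 0). Define sequences by: w_0 = v_0 ∈ Ω; for t ≥ 1, γ_t = 2/(t+1), z_{t−1} = (1−γ_t)w_{t−1} + γ_t v_{t−1}, p_t = (2/(t(t+1)))·Σ_{i=1}^{t} i·∇f(z_{i−1}), v_t ∈ Ω with ⟨p_t, v_t⟩ ≤ ⟨p_t, u⟩ for all u ∈ Ω, and w_t = (1−γ_t)w_{t−1} + γ_t v_t. Then for every w* ∈ Ω and every t ≥ 1, f(w_t) − f(w*) ≤ (2L/(t(t+1)))·Σ_{i=1}^{t} ‖v_i − v_{i−1}‖². -/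
open RealInnerProductSpace

lemma primal_avg_gauss_sum (t : ℕ) :
    (∑ i ∈ Finset.Icc 1 t, (i : ℝ)) = (t : ℝ) * ((t : ℝ) + 1) / 2 := by
  induction t with
  | zero => simp
  | succ n ih =>
      rw [Finset.sum_Icc_succ_top (by omega : 1 ≤ n + 1), ih]
      push_cast; ring

set_option maxHeartbeats 1000000 in
/-- Convergence bound for Primal Averaging with option (A): the oracle direction
`p_t = (2/(t(t+1)))·Σ_{i=1}^{t} i·∇f(z_{i−1})` is the weighted average of past gradients
(weights `θ_i = i`). For every `w* ∈ Ω` and `t ≥ 1`,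
`f(w_t) − f(w*) ≤ (2L/(t(t+1)))·Σ_{i=1}^{t} ‖v_i − v_{i−1}‖²`. -/
theorem primal_averaging_optionA_rate
    {E : Type*} [NormedAddCommGroup E] [InnerProductSpace ℝ E]
    {Ω : Set E} (hne : Ω.Nonempty) (hΩ : Convex ℝ Ω)
    (f : E → ℝ) (f' : E → E) {L : ℝ} (hL : 0 ≤ L)
    (hconv : ConvexOn ℝ Set.univ f)
    (hdiff : ∀ x : E, HasFDerivAt f (innerSL ℝ (f' x)) x)
    (hsmooth : ∀ x y : E, |f x - f y - ⟪f' y, x - y⟫| ≤ L / 2 * ‖x - y‖ ^ 2)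
    (w v z p : ℕ → E)
    (hw0 : w 0 = v 0) (hv0 : v 0 ∈ Ω)
    (hz : ∀ t : ℕ, 1 ≤ t →
      z (t - 1) = (1 - 2 / ((t : ℝ) + 1)) • w (t - 1) + (2 / ((t : ℝ) + 1)) • v (t - 1))
    (hp : ∀ t : ℕ, 1 ≤ t →
      p t = (2 / ((t : ℝ) * ((t : ℝ) + 1))) • ∑ i ∈ Finset.Icc 1 t, (i : ℝ) • f' (z (i - 1)))
    (hvmem : ∀ t : ℕ, 1 ≤ t → v t ∈ Ω)
    (horacle : ∀ t : ℕ, 1 ≤ t → ∀ u ∈ Ω, ⟪p t, v t⟫ ≤ ⟪p t, u⟫)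
    (hw : ∀ t : ℕ, 1 ≤ t →
      w t = (1 - 2 / ((t : ℝ) + 1)) • w (t - 1) + (2 / ((t : ℝ) + 1)) • v t) :
    ∀ wstar ∈ Ω, ∀ t : ℕ, 1 ≤ t →
      f (w t) - f wstar ≤
        2 * L / ((t : ℝ) * ((t : ℝ) + 1)) * ∑ i ∈ Finset.Icc 1 t, ‖v i - v (i - 1)‖ ^ 2 := by
  -- gradient inequality from convexity + smoothness
  have grad : ∀ x y : E, f y + ⟪f' y, x - y⟫ ≤ f x := by
    intro x y
    have key : ∀ lam : ℝ, 0 < lam → lam ≤ 1 →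
        lam * ⟪f' y, x - y⟫ ≤ lam * (f x - f y) + L / 2 * lam ^ 2 * ‖x - y‖ ^ 2 := by
      intro lam h0 h1
      have hc := hconv.2 (Set.mem_univ x) (Set.mem_univ y) (le_of_lt h0)
        (by linarith : (0:ℝ) ≤ 1 - lam) (by ring)
      have hs := neg_le_of_abs_le (hsmooth (lam • x + (1 - lam) • y) y)
      have hpt : lam • x + (1 - lam) • y - y = lam • (x - y) := by module
      rw [hpt, real_inner_smul_right, norm_smul, Real.norm_eq_abs, abs_of_pos h0] at hs
      simp only [smul_eq_mul] at hc
      ring_nf at hs ⊢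
      nlinarith [hs, hc]
    have hε : ∀ ε : ℝ, 0 < ε → ⟪f' y, x - y⟫ ≤ (f x - f y) + ε := by
      intro ε hε
      set D : ℝ := L / 2 * ‖x - y‖ ^ 2 with hD
      have hD0 : 0 ≤ D := by positivity
      set lam : ℝ := min 1 (ε / (D + 1)) with hlam
      have h0 : 0 < lam := lt_min one_pos (by positivity)
      have h1 : lam ≤ 1 := min_le_left _ _
      have h3 : lam * (D + 1) ≤ ε := by
        rw [← le_div_iff₀ (by positivity)]; exact min_le_right _ _
      have hk := key lam h0 h1
      have : ⟪f' y, x - y⟫ ≤ (f x - f y) + lam * D := by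
        rw [← mul_le_mul_iff_right₀ h0]; nlinarith [hk]
      nlinarith [this, h0]
    linarith [le_of_forall_pos_le_add hε]
  -- linear difference of the lower model
  have φdiff : ∀ n : ℕ, 1 ≤ n → ∀ u u' : E,
      (∑ i ∈ Finset.Icc 1 n, (i : ℝ) * (f (z (i - 1)) + ⟪f' (z (i - 1)), u - z (i - 1)⟫))
        - (∑ i ∈ Finset.Icc 1 n, (i : ℝ) * (f (z (i - 1)) + ⟪f' (z (i - 1)), u' - z (i - 1)⟫))
        = (n : ℝ) * ((n : ℝ) + 1) / 2 * ⟪p n, u - u'⟫ := by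
    intro n hn u u'
    have hinner : ⟪p n, u - u'⟫ = (2 / ((n : ℝ) * ((n : ℝ) + 1))) *
        ∑ i ∈ Finset.Icc 1 n, (i : ℝ) * ⟪f' (z (i - 1)), u - u'⟫ := by
      rw [hp n hn, real_inner_smul_left, sum_inner]
      congr 1
      exact Finset.sum_congr rfl fun i _ => real_inner_smul_left _ _ _
    rw [hinner, ← Finset.sum_sub_distrib]
    have hterm : ∀ i ∈ Finset.Icc 1 n,
        (i : ℝ) * (f (z (i - 1)) + ⟪f' (z (i - 1)), u - z (i - 1)⟫)
          - (i : ℝ) * (f (z (i - 1)) + ⟪f' (z (i - 1)), u' - z (i - 1)⟫)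
          = (i : ℝ) * ⟪f' (z (i - 1)), u - u'⟫ := by
      intro i _
      simp only [inner_sub_right]; ring
    rw [Finset.sum_congr rfl hterm]
    have hne' : ((n : ℝ)) ≠ 0 := by
      have : (0:ℝ) < (n:ℝ) := by exact_mod_cast hn
      linarith
    field_simp
  -- main induction
  have main : ∀ n : ℕ, 1 ≤ n →
      (n : ℝ) * ((n : ℝ) + 1) / 2 * f (w n) ≤
        (∑ i ∈ Finset.Icc 1 n, (i : ℝ) * (f (z (i - 1)) + ⟪f' (z (i - 1)), v n - z (i - 1)⟫))
          + L * ∑ i ∈ Finset.Icc 1 n, ‖v i - v (i - 1)‖ ^ 2 := by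
    intro n hn
    induction n, hn using Nat.le_induction with
    | base =>
        have hz1 := hz 1 le_rfl
        have hw1 := hw 1 le_rfl
        norm_num at hz1 hw1
        have hs := le_of_abs_le (hsmooth (w 1) (z 0))
        simp only [Finset.Icc_self, Finset.sum_singleton]
        norm_num
        rw [hz1, hw1]
        rw [hz1, hw1] at hs
        nlinarith [hs, mul_nonneg hL (sq_nonneg ‖v 1 - v 0‖), sq_nonneg ‖v 1 - v 0‖]
    | succ n hn ih =>
        have hn1 : (1:ℕ) ≤ n + 1 := by omega
        have hzs := hz (n + 1) hn1
        have hws := hw (n + 1) hn1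
        simp only [Nat.add_sub_cancel] at hzs hws
        push_cast at hzs hws
        have hNpos : (0:ℝ) < (n : ℝ) := by exact_mod_cast hn
        set N : ℝ := (n : ℝ) with hN
        set gam : ℝ := 2 / (N + 1 + 1) with hgam
        have hgam0 : 0 < gam := by rw [hgam]; positivity
        have hgam1 : gam ≤ 1 := by
          rw [hgam, div_le_one (by linarith)]; linarith
        -- geometric facts
        have hd : w (n + 1) - z n = gam • (v (n + 1) - v n) := by
          rw [hws, hzs]; module
        have hdec : w (n + 1) - z n = (1 - gam) • (w n - z n) + gam • (v (n + 1) - z n) := by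
          rw [hws]; module
        have hin2 : ⟪f' (z n), w (n + 1) - z n⟫
            = (1 - gam) * ⟪f' (z n), w n - z n⟫ + gam * ⟪f' (z n), v (n + 1) - z n⟫ := by
          rw [hdec, inner_add_right, real_inner_smul_right, real_inner_smul_right]
        have hnorm : ‖w (n + 1) - z n‖ ^ 2 = gam ^ 2 * ‖v (n + 1) - v n‖ ^ 2 := by
          rw [hd, norm_smul, mul_pow, Real.norm_eq_abs, sq_abs]
        have hs := le_of_abs_le (hsmooth (w (n + 1)) (z n))
        rw [hin2, hnorm] at hs
        have hgr := grad (w n) (z n)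
        -- abbreviations
        set I1 : ℝ := ⟪f' (z n), w n - z n⟫ with hI1
        set I2 : ℝ := ⟪f' (z n), v (n + 1) - z n⟫ with hI2
        set Q : ℝ := ‖v (n + 1) - v n‖ ^ 2 with hQ
        have hQ0 : 0 ≤ Q := by rw [hQ]; positivity
        -- scalar identities
        have hΘpos : (0:ℝ) < (N + 1) * (N + 2) / 2 := by positivity
        have hg2 : gam * (N + 2) = 2 := by
          rw [hgam]; field_simp; ring
        have a1 : (N + 1) * (N + 2) / 2 * (1 - gam) = N * (N + 1) / 2 := by
          linear_combination (-(N + 1) / 2) * hg2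
        have a2 : (N + 1) * (N + 2) / 2 * gam = N + 1 := by
          linear_combination ((N + 1) / 2) * hg2
        have a3 : (N + 1) * (N + 2) / 2 * gam ^ 2 ≤ 2 := by
          have e : (N + 1) * (N + 2) / 2 * gam ^ 2 = (N + 1) * gam := by
            linear_combination ((N + 1) / 2 * gam) * hg2
          rw [e]; nlinarith [hg2, hgam0.le]
        -- step 1 : multiply smoothness bound by Θ_{n+1}
        have hB : f (w (n + 1)) ≤ f (z n) + (1 - gam) * I1 + gam * I2 + L / 2 * gam ^ 2 * Q := by
          linarith [hs]
        have hmul := mul_le_mul_of_nonneg_left hB (le_of_lt hΘpos)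
        have key2 : (N + 1) * (N + 2) / 2 *
              (f (z n) + (1 - gam) * I1 + gam * I2 + L / 2 * gam ^ 2 * Q)
            = ((N + 1) * (N + 2) / 2 * (1 - gam)) * (f (z n) + I1)
              + ((N + 1) * (N + 2) / 2 * gam) * (f (z n) + I2)
              + L / 2 * ((N + 1) * (N + 2) / 2 * gam ^ 2) * Q := by ring
        rw [key2, a1, a2] at hmul
        have hb1 : N * (N + 1) / 2 * (f (z n) + I1) ≤ N * (N + 1) / 2 * f (w n) :=
          mul_le_mul_of_nonneg_left hgr (by positivity)
        have hb2 : L / 2 * ((N + 1) * (N + 2) / 2 * gam ^ 2) * Q ≤ L * Q := by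
          nlinarith [mul_nonneg (mul_nonneg hL hQ0) (sub_nonneg.2 a3)]
        have step1 : (N + 1) * (N + 2) / 2 * f (w (n + 1))
            ≤ N * (N + 1) / 2 * f (w n) + (N + 1) * (f (z n) + I2) + L * Q := by
          linarith [hmul, hb1, hb2]
        -- monotonicity of the model minimum
        have mono : (∑ i ∈ Finset.Icc 1 n,
              (i : ℝ) * (f (z (i - 1)) + ⟪f' (z (i - 1)), v n - z (i - 1)⟫))
            ≤ ∑ i ∈ Finset.Icc 1 n,
              (i : ℝ) * (f (z (i - 1)) + ⟪f' (z (i - 1)), v (n + 1) - z (i - 1)⟫) := by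
          have hd2 := φdiff n hn (v n) (v (n + 1))
          have ho := horacle n hn (v (n + 1)) (hvmem (n + 1) hn1)
          have hnp : N * (N + 1) / 2 * ⟪p n, v n - v (n + 1)⟫ ≤ 0 :=
            mul_nonpos_of_nonneg_of_nonpos (by positivity)
              (by rw [inner_sub_right]; linarith)
          rw [← hN] at hd2
          linarith [hd2, hnp]
        -- expand sums at n+1
        rw [Finset.sum_Icc_succ_top hn1, Finset.sum_Icc_succ_top hn1]
        simp only [Nat.add_sub_cancel]
        push_cast
        simp only [← hN, ← hI2, ← hQ]
        rw [show (N + 1) * (N + 1 + 1) / 2 = (N + 1) * (N + 2) / 2 from by ring]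
        linarith [step1, ih, mono]
  -- conclude
  intro wstar hwstar t ht
  have htpos : (0:ℝ) < (t : ℝ) := by exact_mod_cast ht
  have h1 := main t ht
  have h2 : (∑ i ∈ Finset.Icc 1 t,
        (i : ℝ) * (f (z (i - 1)) + ⟪f' (z (i - 1)), v t - z (i - 1)⟫))
      ≤ ∑ i ∈ Finset.Icc 1 t,
        (i : ℝ) * (f (z (i - 1)) + ⟪f' (z (i - 1)), wstar - z (i - 1)⟫) := by
    have hd2 := φdiff t ht (v t) wstar
    have ho := horacle t ht wstar hwstar
    have hnp : (t : ℝ) * ((t : ℝ) + 1) / 2 * ⟪p t, v t - wstar⟫ ≤ 0 :=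
      mul_nonpos_of_nonneg_of_nonpos (by positivity)
        (by rw [inner_sub_right]; linarith)
    linarith [hd2, hnp]
  have h3 : (∑ i ∈ Finset.Icc 1 t,
        (i : ℝ) * (f (z (i - 1)) + ⟪f' (z (i - 1)), wstar - z (i - 1)⟫))
      ≤ (t : ℝ) * ((t : ℝ) + 1) / 2 * f wstar := by
    calc (∑ i ∈ Finset.Icc 1 t,
          (i : ℝ) * (f (z (i - 1)) + ⟪f' (z (i - 1)), wstar - z (i - 1)⟫))
        ≤ ∑ i ∈ Finset.Icc 1 t, (i : ℝ) * f wstar := by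
          refine Finset.sum_le_sum fun i _ => ?_
          have := grad wstar (z (i - 1))
          have hi0 : (0:ℝ) ≤ (i : ℝ) := Nat.cast_nonneg i
          nlinarith [this, hi0]
      _ = (t : ℝ) * ((t : ℝ) + 1) / 2 * f wstar := by
          rw [← Finset.sum_mul, primal_avg_gauss_sum]
  have hfin : (t : ℝ) * ((t : ℝ) + 1) / 2 * (f (w t) - f wstar)
      ≤ L * ∑ i ∈ Finset.Icc 1 t, ‖v i - v (i - 1)‖ ^ 2 := by nlinarith [h1, h2, h3]
  have hΘpos : (0:ℝ) < (t : ℝ) * ((t : ℝ) + 1) / 2 := by positivity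
  calc f (w t) - f wstar
      ≤ (L * ∑ i ∈ Finset.Icc 1 t, ‖v i - v (i - 1)‖ ^ 2) / ((t : ℝ) * ((t : ℝ) + 1) / 2) :=
        (le_div_iff₀ hΘpos).2 (by linarith [hfin])
    _ = 2 * L / ((t : ℝ) * ((t : ℝ) + 1)) * ∑ i ∈ Finset.Icc 1 t, ‖v i - v (i - 1)‖ ^ 2 := by
        field_simp
end

section
/- Let E be a real inner product space, α > 0, and let Ω ⊆ E be a nonempty compact α-strongly convex set. Let f : E → ℝ be differentiable with gradient ∇f and L-smooth (L > 0). Let w ∈ Ω with ∇f(w) ≠ 0, and let v ∈ Ω satisfy ⟨∇f(w), v⟩ ≤ ⟨∇f(w), u⟩ for all u ∈ Ω. Define γ = 1 if L < α‖∇f(w)‖/4, and γ = α‖∇f(w)‖/(4L) otherwise. Then γ ∈ (0,1] and for every w* ∈ Ω, f(w + γ(v − w)) ≤ f(w) + (γ/2)·⟨w* − w, ∇f(w)⟩. -/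
open RealInnerProductSpace

/-- Garber–Hazan per-step guarantee over strongly convex sets (no convexity of `f`
required): with `γ = 1` if `L < α‖∇f(w)‖/4` and `γ = α‖∇f(w)‖/(4L)` otherwise, we have
`γ ∈ (0,1]` and `f(w + γ(v − w)) ≤ f(w) + (γ/2)⟨w* − w, ∇f(w)⟩` for every `w* ∈ Ω`. -/
theorem garber_hazan_per_step
    {E : Type*} [NormedAddCommGroup E] [InnerProductSpace ℝ E]
    {α : ℝ} (hα : 0 < α) {Ω : Set E} (hne : Ω.Nonempty) (hcomp : IsCompact Ω)
    (hΩ : StronglyConvexSet α Ω)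
    (f : E → ℝ) (f' : E → E) {L : ℝ} (hL : 0 < L)
    (hdiff : ∀ x : E, HasFDerivAt f (innerSL ℝ (f' x)) x)
    (hsmooth : ∀ x y : E, |f x - f y - ⟪f' y, x - y⟫| ≤ L / 2 * ‖x - y‖ ^ 2)
    {w : E} (hw : w ∈ Ω) (hgw : f' w ≠ 0)
    {v : E} (hv : v ∈ Ω) (horacle : ∀ u ∈ Ω, ⟪f' w, v⟫ ≤ ⟪f' w, u⟫)
    {γ : ℝ} (hγdef : γ = if L < α * ‖f' w‖ / 4 then 1 else α * ‖f' w‖ / (4 * L)) :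
    γ ∈ Set.Ioc (0 : ℝ) 1 ∧
      ∀ wstar ∈ Ω, f (w + γ • (v - w)) ≤ f w + γ / 2 * ⟪wstar - w, f' w⟫ := by
  set g := f' w with hg
  have hng : 0 < ‖g‖ := norm_pos_iff.mpr hgw
  set c : ℝ := α / 8 * ‖w - v‖ ^ 2 / ‖g‖ with hc
  have hcnn : 0 ≤ c := by positivity
  set y : E := (1/2 : ℝ) • w + (1/2 : ℝ) • v - c • g with hy
  have hyΩ : y ∈ Ω := by
    apply hΩ w hw v hv (1/2) (by norm_num) y
    have h1 : y - ((1/2 : ℝ) • w + (1 - 1/2 : ℝ) • v) = -(c • g) := by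
      rw [hy]; norm_num
    rw [h1, norm_neg, norm_smul, Real.norm_eq_abs, abs_of_nonneg hcnn]
    apply le_of_eq
    rw [hc]
    field_simp
    ring
  have hkey : α * ‖g‖ / 4 * ‖v - w‖ ^ 2 ≤ -⟪g, v - w⟫ := by
    have h1 := horacle y hyΩ
    have h2 : ⟪g, y⟫ = 1/2 * ⟪g, w⟫ + 1/2 * ⟪g, v⟫ - c * ‖g‖ ^ 2 := by
      rw [hy, inner_sub_right, inner_add_right, real_inner_smul_right,
        real_inner_smul_right, real_inner_smul_right, real_inner_self_eq_norm_sq]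
    have h3 : c * ‖g‖ ^ 2 = α / 8 * ‖v - w‖ ^ 2 * ‖g‖ := by
      rw [hc, norm_sub_rev w v]
      field_simp
    have h5 : ⟪g, v - w⟫ = ⟪g, v⟫ - ⟪g, w⟫ := inner_sub_right _ _ _
    rw [h2, h3] at h1
    linarith
  have hγpos : 0 < γ := by
    rw [hγdef]
    split
    · norm_num
    · positivity
  have hγ1 : γ ≤ 1 := by
    rw [hγdef]
    split
    · exact le_refl 1
    · rw [div_le_one (by positivity)]
      next h => push_neg at h; linarith
  have hLγ : L * γ ≤ α * ‖g‖ / 4 := by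
    rw [hγdef]
    split
    · next h => nlinarith
    · next h =>
        have : L * (α * ‖g‖ / (4 * L)) = α * ‖g‖ / 4 := by
          field_simp
        linarith [this.le]
  refine ⟨⟨hγpos, hγ1⟩, ?_⟩
  intro wstar hws
  have hsm := (abs_le.mp (hsmooth (w + γ • (v - w)) w)).2
  have hx : w + γ • (v - w) - w = γ • (v - w) := by abel
  rw [hx, real_inner_smul_right, norm_smul, Real.norm_eq_abs,
    abs_of_nonneg hγpos.le, mul_pow] at hsm
  have horw := horacle wstar hws
  have hcomm : ⟪wstar - w, g⟫ = ⟪g, wstar⟫ - ⟪g, w⟫ := by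
    rw [real_inner_comm, inner_sub_right]
  have h5 : ⟪g, v - w⟫ = ⟪g, v⟫ - ⟪g, w⟫ := inner_sub_right _ _ _
  have hN : (0:ℝ) ≤ ‖v - w‖ ^ 2 := by positivity
  rw [hcomm]
  nlinarith [mul_le_mul_of_nonneg_right hLγ hN,
    mul_le_mul_of_nonneg_left hkey (by linarith : (0:ℝ) ≤ γ / 2),
    mul_le_mul_of_nonneg_left
      (mul_le_mul_of_nonneg_right hLγ hN) (by linarith : (0:ℝ) ≤ γ / 2)]
end

section
/- Let E be a real inner product space, α > 0, and let Ω ⊆ E be a nonempty compact α-strongly convex set. Let f : E → ℝ be differentiable with gradient ∇f and L-smooth (L > 0). Let ε, κ > 0, let w, w* ∈ Ω, suppose ∇f(w) ≠ 0 and ⟨∇f(w), y − w⟩ ≤ 0 for every y ∈ E with ‖y − w*‖ ≤ ε/κ, and let v ∈ Ω satisfy ⟨∇f(w), v⟩ ≤ ⟨∇f(w), u⟩ for all u ∈ Ω. Then there exists γ ∈ [0,1] such that f(w + γ(v − w)) ≤ f(w) − min( ε‖∇f(w)‖/(2κ), α·ε·‖∇f(w)‖²/(8κL) ). -/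
open RealInnerProductSpace

lemma fw_aux (a l c : ℝ) (ha : 0 < a) (hl : 0 < l) :
    a / (4 * l) * c - 2 * l * c * (a / (4 * l)) ^ 2 / a = a * c / (8 * l) := by
  field_simp; ring

set_option maxHeartbeats 1000000 in
/-- Per-iteration decrease of Frank–Wolfe with exact line search on strictly-locally-
quasi-convex objectives over strongly convex sets: there is a step size `γ ∈ [0,1]` with
`f(w + γ(v − w)) ≤ f(w) − min(ε‖∇f(w)‖/(2κ), αε‖∇f(w)‖²/(8κL))`. -/
theorem frank_wolfe_slqc_decrease
    {E : Type*} [NormedAddCommGroup E] [InnerProductSpace ℝ E]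
    {α : ℝ} (hα : 0 < α) {Ω : Set E} (hne : Ω.Nonempty) (hcomp : IsCompact Ω)
    (hΩ : StronglyConvexSet α Ω)
    (f : E → ℝ) (f' : E → E) {L : ℝ} (hL : 0 < L)
    (hdiff : ∀ x : E, HasFDerivAt f (innerSL ℝ (f' x)) x)
    (hsmooth : ∀ x y : E, |f x - f y - ⟪f' y, x - y⟫| ≤ L / 2 * ‖x - y‖ ^ 2)
    {ε κ : ℝ} (hε : 0 < ε) (hκ : 0 < κ)
    {w wstar : E} (hw : w ∈ Ω) (hwstar : wstar ∈ Ω)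
    (hgw : f' w ≠ 0)
    (hslqc : ∀ y : E, ‖y - wstar‖ ≤ ε / κ → ⟪f' w, y - w⟫ ≤ 0)
    {v : E} (hv : v ∈ Ω) (horacle : ∀ u ∈ Ω, ⟪f' w, v⟫ ≤ ⟪f' w, u⟫) :
    ∃ γ ∈ Set.Icc (0 : ℝ) 1,
      f (w + γ • (v - w)) ≤
        f w - min (ε * ‖f' w‖ / (2 * κ)) (α * ε * ‖f' w‖ ^ 2 / (8 * κ * L)) := by
  set g := f' w with hgdef
  have hgn : (0:ℝ) < ‖g‖ := norm_pos_iff.mpr hgw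
  -- Step 1 : ⟪g, v - w⟫ ≤ -(ε/κ * ‖g‖)
  have h1 : ⟪g, v - w⟫ ≤ -(ε / κ * ‖g‖) := by
    have hy := hslqc (wstar + (ε / κ * ‖g‖⁻¹) • g) (by
      rw [add_sub_cancel_left, norm_smul, Real.norm_eq_abs,
        abs_of_nonneg (by positivity)]
      rw [mul_assoc, inv_mul_cancel₀ hgn.ne', mul_one])
    have hexp : ⟪g, wstar + (ε / κ * ‖g‖⁻¹) • g - w⟫
        = ⟪g, wstar - w⟫ + ε / κ * ‖g‖ := by
      rw [add_sub_right_comm, inner_add_right, inner_smul_right,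
        real_inner_self_eq_norm_sq]
      field_simp
    rw [hexp] at hy
    have hvw : ⟪g, v⟫ ≤ ⟪g, wstar⟫ := horacle wstar hwstar
    rw [inner_sub_right] at hy ⊢
    linarith
  -- Step 2 : norm bound via strong convexity
  have h2 : α / 4 * ‖v - w‖ ^ 2 * ‖g‖ ≤ -⟪g, v - w⟫ := by
    set c := α / 8 * ‖w - v‖ ^ 2 * ‖g‖⁻¹ with hc
    have hyΩ : (1/2:ℝ) • w + (1/2:ℝ) • v - c • g ∈ Ω := by
      apply hΩ w hw v hv (1/2) (by norm_num)
      have heq : (1/2:ℝ) • w + (1/2:ℝ) • v - c • g -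
          ((1/2:ℝ) • w + (1 - (1/2:ℝ)) • v) = -(c • g) := by
        norm_num
      rw [heq, norm_neg, norm_smul, Real.norm_eq_abs, abs_of_nonneg (by positivity)]
      rw [hc]
      rw [mul_assoc, inv_mul_cancel₀ hgn.ne', mul_one]
      ring_nf
      nlinarith [sq_nonneg ‖w - v‖]
    have ho := horacle _ hyΩ
    rw [inner_sub_right, inner_add_right, inner_smul_right, inner_smul_right,
      inner_smul_right, real_inner_self_eq_norm_sq] at ho
    have hcg : c * ‖g‖ ^ 2 = α / 8 * ‖w - v‖ ^ 2 * ‖g‖ := by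
      rw [hc]; field_simp
    rw [hcg] at ho
    rw [inner_sub_right]
    rw [norm_sub_rev v w]
    linarith
  -- Step 3 : choose γ  -- Step 3 : generalize to opaque reals and choose γ
  obtain ⟨G, hG⟩ : ∃ G : ℝ, ‖g‖ = G := ⟨_, rfl⟩
  obtain ⟨P, hP⟩ : ∃ P : ℝ, ⟪g, v - w⟫ = P := ⟨_, rfl⟩
  obtain ⟨D, hDdef⟩ : ∃ D : ℝ, ‖v - w‖ = D := ⟨_, rfl⟩
  rw [hG] at hgn
  rw [hG, hP, hDdef] at h2
  rw [hG, hP] at h1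
  set C : ℝ := -P with hC
  have hC1 : ε / κ * G ≤ C := by rw [hC]; linarith
  have hC1' : ε * G ≤ κ * C := by
    rw [div_mul_eq_mul_div, div_le_iff₀ hκ] at hC1; linarith
  have hCpos : 0 < C := by
    rw [hC]; nlinarith [mul_pos (div_pos hε hκ) hgn]
  set γ := min 1 (α * G / (4 * L)) with hγ
  have hγpos : 0 < γ := lt_min one_pos (by positivity)
  have hγle : γ ≤ 1 := min_le_left _ _
  refine ⟨γ, ⟨hγpos.le, hγle⟩, ?_⟩
  rw [hG]
  have hsm := hsmooth (w + γ • (v - w)) w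
  rw [add_sub_cancel_left, inner_smul_right, norm_smul, Real.norm_eq_abs,
    abs_of_nonneg hγpos.le, mul_pow, ← hgdef, hP, hDdef] at hsm
  have hfb : f (w + γ • (v - w)) ≤ f w - γ * C + L / 2 * (γ ^ 2 * D ^ 2) := by
    have := abs_le.mp hsm
    rw [hC]
    linarith [this.2]
  have hD' : D ^ 2 * (α * G) ≤ 4 * C := by nlinarith
  have hquad : L / 2 * (γ ^ 2 * D ^ 2) ≤ 2 * L * C * γ ^ 2 / (α * G) := by
    rw [le_div_iff₀ (by positivity)]
    nlinarith [mul_le_mul_of_nonneg_left hD' (show (0:ℝ) ≤ L/2*γ^2 by positivity)]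
  have key : min (ε * G / (2 * κ)) (α * ε * G ^ 2 / (8 * κ * L)) ≤
      γ * C - 2 * L * C * γ ^ 2 / (α * G) := by
    rcases le_or_gt 1 (α * G / (4 * L)) with hcase | hcase
    · have hγ1 : γ = 1 := hγ.trans (min_eq_left hcase)
      rw [hγ1]
      have h4L : 4 * L ≤ α * G := by
        rw [le_div_iff₀ (by positivity)] at hcase; linarith
      have hstep : 2 * L * C * 1 ^ 2 / (α * G) ≤ C / 2 := by
        rw [div_le_div_iff₀ (by positivity) (by norm_num)]
        nlinarith
      calc min (ε * G / (2 * κ)) (α * ε * G ^ 2 / (8 * κ * L)) ≤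
          ε * G / (2 * κ) := min_le_left _ _
        _ ≤ C / 2 := by
            rw [div_le_div_iff₀ (by positivity) (by norm_num)]
            linarith
        _ ≤ _ := by linarith
    · have hγ2 : γ = α * G / (4 * L) := hγ.trans (min_eq_right hcase.le)
      have hrhs : γ * C - 2 * L * C * γ ^ 2 / (α * G) = α * G * C / (8 * L) := by
        rw [hγ2]; exact fw_aux (α * G) L C (by positivity) hL
      rw [hrhs]
      calc min (ε * G / (2 * κ)) (α * ε * G ^ 2 / (8 * κ * L)) ≤
          α * ε * G ^ 2 / (8 * κ * L) := min_le_right _ _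
        _ ≤ α * G * C / (8 * L) := by
            rw [div_le_div_iff₀ (by positivity) (by positivity)]
            nlinarith [mul_le_mul_of_nonneg_left hC1'
              (show (0:ℝ) ≤ 8 * α * G * L by positivity)]
  linarith
end

section
/- Let E be a real inner product space, α > 0, and let Ω ⊆ E be a nonempty compact α-strongly convex set. Let f : E → ℝ be differentiable with gradient ∇f and L-smooth (L > 0). Let w* ∈ Ω satisfy f(w*) ≤ f(w) for all w ∈ Ω, and let ε, κ, θ > 0. Assume that for every w ∈ Ω with f(w) − f(w*) > ε: (i) ‖∇f(w)‖ ≥ θε, and (ii) ⟨∇f(w), y − w⟩ ≤ 0 for every y ∈ E with ‖y − w*‖ ≤ ε/κ. Consider Frank–Wolfe with exact line search: w_1 ∈ Ω and, for each t ≥ 1, v_t ∈ Ω with ⟨∇f(w_t), v_t⟩ ≤ ⟨∇f(w_t), u⟩ for all u ∈ Ω, and w_{t+1} ∈ Ω with f(w_{t+1}) ≤ f(w_t + γ(v_t − w_t)) for all γ ∈ [0,1]. If T ≥ 1 is such that f(w_s) − f(w*) > ε for all s = 1, …, T, then T ≤ (f(w_1) − f(w*)) / min( θε²/(2κ), α·θ²·ε³/(8κL)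 ). -/
open RealInnerProductSpace

set_option maxHeartbeats 1000000 in
/-- Theorem 3 of the paper: for a smooth strictly-locally-quasi-convex objective (with a
gradient-norm lower bound) over a compact strongly convex set, Frank–Wolfe with exact line
search stays outside the `ε`-neighborhood of the global minimum for at most
`(f(w₁) − f(w*)) / min(θε²/(2κ), αθ²ε³/(8κL))` iterations. -/
theorem frank_wolfe_slqc_iteration_bound
    {E : Type*} [NormedAddCommGroup E] [InnerProductSpace ℝ E]
    {α : ℝ} (hα : 0 < α) {Ω : Set E} (hne : Ω.Nonempty) (hcomp : IsCompact Ω)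
    (hΩ : StronglyConvexSet α Ω)
    (f : E → ℝ) (f' : E → E) {L : ℝ} (hL : 0 < L)
    (hdiff : ∀ x : E, HasFDerivAt f (innerSL ℝ (f' x)) x)
    (hsmooth : ∀ x y : E, |f x - f y - ⟪f' y, x - y⟫| ≤ L / 2 * ‖x - y‖ ^ 2)
    {wstar : E} (hwstar : wstar ∈ Ω) (hmin : ∀ x ∈ Ω, f wstar ≤ f x)
    {ε κ θ : ℝ} (hε : 0 < ε) (hκ : 0 < κ) (hθ : 0 < θ)
    (hgrad : ∀ x ∈ Ω, ε < f x - f wstar → θ * ε ≤ ‖f' x‖)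
    (hslqc : ∀ x ∈ Ω, ε < f x - f wstar →
      ∀ y : E, ‖y - wstar‖ ≤ ε / κ → ⟪f' x, y - x⟫ ≤ 0)
    (w v : ℕ → E)
    (hwmem : ∀ s : ℕ, 1 ≤ s → w s ∈ Ω)
    (hvmem : ∀ s : ℕ, 1 ≤ s → v s ∈ Ω)
    (horacle : ∀ s : ℕ, 1 ≤ s → ∀ u ∈ Ω, ⟪f' (w s), v s⟫ ≤ ⟪f' (w s), u⟫)
    (hls : ∀ s : ℕ, 1 ≤ s → ∀ γ ∈ Set.Icc (0 : ℝ) 1,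
      f (w (s + 1)) ≤ f (w s + γ • (v s - w s)))
    {T : ℕ} (hT : 1 ≤ T)
    (hfar : ∀ s : ℕ, 1 ≤ s → s ≤ T → ε < f (w s) - f wstar) :
    (T : ℝ) ≤ (f (w 1) - f wstar) /
      min (θ * ε ^ 2 / (2 * κ)) (α * θ ^ 2 * ε ^ 3 / (8 * κ * L)) := by
  set c := min (θ * ε ^ 2 / (2 * κ)) (α * θ ^ 2 * ε ^ 3 / (8 * κ * L)) with hcdef
  have hc1 : 0 < θ * ε ^ 2 / (2 * κ) := by positivity
  have hc2 : 0 < α * θ ^ 2 * ε ^ 3 / (8 * κ * L) := by positivity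
  have hcpos : 0 < c := lt_min hc1 hc2
  -- per-step decrease
  have step : ∀ s : ℕ, 1 ≤ s → s ≤ T → f (w (s + 1)) + c ≤ f (w s) := by
    intro s hs1 hsT
    set g := f' (w s) with hg
    have hwΩ := hwmem s hs1
    have hvΩ := hvmem s hs1
    have hfarS := hfar s hs1 hsT
    have hgn : θ * ε ≤ ‖g‖ := hgrad _ hwΩ hfarS
    have hgpos : 0 < ‖g‖ := lt_of_lt_of_le (by positivity) hgn
    have hgne : g ≠ 0 := by
      intro h; rw [h, norm_zero] at hgpos; exact lt_irrefl 0 hgpos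
    set uvec : E := ‖g‖⁻¹ • g with huvec
    have huvn : ‖uvec‖ = 1 := norm_smul_inv_norm hgne
    have huv : ⟪g, uvec⟫ = ‖g‖ := by
      rw [huvec, real_inner_smul_right, real_inner_self_eq_norm_sq, sq, ← mul_assoc,
        inv_mul_cancel₀ (ne_of_gt hgpos), one_mul]
    set D := ‖v s - w s‖ with hD
    have hDnn : 0 ≤ D := norm_nonneg _
    set G := ⟪g, w s⟫ - ⟪g, v s⟫ with hGdef
    -- Claim A : G ≥ θ ε² / κ
    have hA : ⟪g, wstar⟫ + ε / κ * ‖g‖ ≤ ⟪g, w s⟫ := by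
      have hy : ‖(wstar + (ε / κ) • uvec) - wstar‖ ≤ ε / κ := by
        rw [add_sub_cancel_left, norm_smul, huvn, mul_one, Real.norm_eq_abs,
          abs_of_pos (by positivity)]
      have h0 := hslqc (w s) hwΩ hfarS (wstar + (ε / κ) • uvec) hy
      rw [inner_sub_right, inner_add_right, real_inner_smul_right, huv] at h0
      linarith
    have hO : ⟪g, v s⟫ ≤ ⟪g, wstar⟫ := horacle s hs1 wstar hwstar
    have hG1 : θ * ε ^ 2 / κ ≤ G := by
      have h1 : ε / κ * (θ * ε) ≤ ε / κ * ‖g‖ :=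
        mul_le_mul_of_nonneg_left hgn (by positivity)
      have h2 : θ * ε ^ 2 / κ = ε / κ * (θ * ε) := by ring
      rw [h2, hGdef]; linarith
    have hGpos : 0 < G := lt_of_lt_of_le (by positivity) hG1
    -- Claim B via strong convexity : (α/4) D² ‖g‖ ≤ G
    have hB : α / 4 * D ^ 2 * ‖g‖ ≤ G := by
      set m : E := (1/2 : ℝ) • v s + (1/2 : ℝ) • w s - ((α / 8) * D ^ 2) • uvec with hm
      have hmΩ : m ∈ Ω := by
        apply hΩ (v s) hvΩ (w s) hwΩ (1/2) ⟨by norm_num, by norm_num⟩ m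
        have he : m - ((1/2 : ℝ) • v s + (1 - (1/2 : ℝ)) • w s)
            = -(((α / 8) * D ^ 2) • uvec) := by
          rw [hm]; module
        rw [he, norm_neg, norm_smul, huvn, mul_one, Real.norm_eq_abs,
          abs_of_nonneg (by positivity)]
        rw [← hD]
        nlinarith [sq_nonneg D, hα.le]
      have h0 := horacle s hs1 m hmΩ
      rw [hm, inner_sub_right, inner_add_right, real_inner_smul_right,
        real_inner_smul_right, real_inner_smul_right, huv] at h0
      rw [hGdef]; linarith
    have hDpos : 0 < D := by
      rcases lt_or_eq_of_le hDnn with h | h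
      · exact h
      · exfalso
        have : v s - w s = 0 := by rwa [hD, eq_comm, norm_eq_zero] at h
        have hvw : v s = w s := by rwa [sub_eq_zero] at this
        rw [hGdef, hvw, sub_self] at hGpos
        exact lt_irrefl 0 hGpos
    -- smoothness bound along the segment
    have hsm : ∀ γ : ℝ, 0 ≤ γ → γ ≤ 1 →
        f (w (s + 1)) ≤ f (w s) - γ * G + L / 2 * γ ^ 2 * D ^ 2 := by
      intro γ h0 h1
      have hls' := hls s hs1 γ ⟨h0, h1⟩
      have h2 := (abs_le.mp (hsmooth (w s + γ • (v s - w s)) (w s))).2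
      have hin : ⟪g, (w s + γ • (v s - w s)) - w s⟫ = -(γ * G) := by
        rw [add_sub_cancel_left, real_inner_smul_right, inner_sub_right, hGdef]; ring
      have hnn : ‖(w s + γ • (v s - w s)) - w s‖ = γ * D := by
        rw [add_sub_cancel_left, norm_smul, Real.norm_eq_abs, abs_of_nonneg h0, hD]
      rw [hin, hnn] at h2
      have hsq : (γ * D) ^ 2 = γ ^ 2 * D ^ 2 := by ring
      rw [hsq] at h2
      linarith
    -- case split on step size
    by_cases hcase : G / (L * D ^ 2) ≤ 1
    · set γ₀ := G / (L * D ^ 2) with hγ₀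
      have hLD : 0 < L * D ^ 2 := by positivity
      have hγpos : 0 < γ₀ := div_pos hGpos hLD
      have hγeq : γ₀ * (L * D ^ 2) = G := div_mul_cancel₀ G (ne_of_gt hLD)
      have hdec := hsm γ₀ (le_of_lt hγpos) hcase
      have h6 : L / 2 * γ₀ ^ 2 * D ^ 2 = γ₀ * G / 2 := by rw [← hγeq]; ring
      have hval : f (w (s + 1)) ≤ f (w s) - γ₀ * G / 2 := by linarith
      -- γ₀ ≥ α θ ε / (4 L)
      have h7 : α / 4 * D ^ 2 * (θ * ε) ≤ G :=
        le_trans (mul_le_mul_of_nonneg_left hgn (by positivity : (0:ℝ) ≤ α / 4 * D ^ 2)) hB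
      have h8 : 4 * L * (α / 4 * D ^ 2 * (θ * ε)) ≤ 4 * L * G :=
        mul_le_mul_of_nonneg_left h7 (by positivity)
      have hγlb : α * θ * ε / (4 * L) ≤ γ₀ := by
        rw [hγ₀, div_le_div_iff₀ (by positivity) hLD]
        calc α * θ * ε * (L * D ^ 2) = 4 * L * (α / 4 * D ^ 2 * (θ * ε)) := by ring
          _ ≤ 4 * L * G := h8
          _ = G * (4 * L) := by ring
      have hfin : α * θ ^ 2 * ε ^ 3 / (8 * κ * L) ≤ γ₀ * G / 2 := by
        have h3 : α * θ * ε / (4 * L) * (θ * ε ^ 2 / κ) ≤ γ₀ * G :=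
          mul_le_mul hγlb hG1 (by positivity) (le_of_lt hγpos)
        have h4 : α * θ * ε / (4 * L) * (θ * ε ^ 2 / κ) = α * θ ^ 2 * ε ^ 3 / (4 * κ * L) := by
          field_simp
        rw [h4] at h3
        have h5 : α * θ ^ 2 * ε ^ 3 / (8 * κ * L) = α * θ ^ 2 * ε ^ 3 / (4 * κ * L) / 2 := by
          ring
        rw [h5]; linarith
      have hcle : c ≤ α * θ ^ 2 * ε ^ 3 / (8 * κ * L) := min_le_right _ _
      linarith
    · push_neg at hcase
      have hLD : L * D ^ 2 < G := by
        have hLD0 : 0 < L * D ^ 2 := by positivity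
        have := (one_lt_div hLD0).mp hcase
        linarith
      have hdec := hsm 1 zero_le_one le_rfl
      have hval : f (w (s + 1)) ≤ f (w s) - G / 2 := by nlinarith
      have hcle : c ≤ θ * ε ^ 2 / (2 * κ) := min_le_left _ _
      have : θ * ε ^ 2 / (2 * κ) ≤ G / 2 := by
        have : θ * ε ^ 2 / (2 * κ) = θ * ε ^ 2 / κ / 2 := by ring
        rw [this]; linarith
      linarith
  -- telescoping
  have tele : ∀ s : ℕ, s ≤ T → f (w (s + 1)) + s * c ≤ f (w 1) := by
    intro s
    induction s with
    | zero => intro _; simp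
    | succ n ih =>
      intro h
      have ih' := ih (Nat.le_of_succ_le h)
      have hs := step (n + 1) (Nat.le_add_left 1 n) h
      push_cast
      push_cast at ih'
      linarith
  have hlast := tele T le_rfl
  have hge : f wstar ≤ f (w (T + 1)) := hmin _ (hwmem (T + 1) (by omega))
  have hTc : (T : ℝ) * c ≤ f (w 1) - f wstar := by linarith
  rw [le_div_iff₀ hcpos]
  exact hTc
end

section
/- Let E be a real inner product space, α > 0, and let Ω ⊆ E be a nonempty compact α-strongly convex set. Let f : E → ℝ be differentiable with gradient ∇f. Let w ∈ Ω with ∇f(w) ≠ 0, let v ∈ Ω satisfy ⟨∇f(w), v⟩ ≤ ⟨∇f(w), u⟩ for all u ∈ Ω, and let k = sup_{u ∈ Ω} ⟨u − w, −∇f(w)⟩ be the Frank–Wolfe gap at w. Then there exists c ∈ Ω such that ⟨c − w, ∇f(w)⟩ ≤ −k/2 − (α/8)·‖v − w‖²·‖∇f(w)‖. -/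
open RealInnerProductSpace

/-- Improved descent direction over a strongly convex set: with `v` the Frank–Wolfe oracle
output at `w` and `k` the Frank–Wolfe gap at `w`, there is a point `c ∈ Ω` with
`⟨c − w, ∇f(w)⟩ ≤ −k/2 − (α/8)‖v − w‖²‖∇f(w)‖`. -/
theorem strongly_convex_set_improved_direction
    {E : Type*} [NormedAddCommGroup E] [InnerProductSpace ℝ E]
    {α : ℝ} (hα : 0 < α) {Ω : Set E} (hne : Ω.Nonempty) (hcomp : IsCompact Ω)
    (hΩ : StronglyConvexSet α Ω)
    (f : E → ℝ) (f' : E → E)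
    (hdiff : ∀ x : E, HasFDerivAt f (innerSL ℝ (f' x)) x)
    {w : E} (hw : w ∈ Ω) (hgw : f' w ≠ 0)
    {v : E} (hv : v ∈ Ω) (horacle : ∀ u ∈ Ω, ⟪f' w, v⟫ ≤ ⟪f' w, u⟫)
    {k : ℝ} (hk : k = sSup ((fun u => ⟪u - w, -(f' w)⟫) '' Ω)) :
    ∃ c ∈ Ω, ⟪c - w, f' w⟫ ≤ -(k / 2) - α / 8 * ‖v - w‖ ^ 2 * ‖f' w‖ := by
  have hnorm : (0:ℝ) < ‖f' w‖ := norm_pos_iff.mpr hgw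
  set t : ℝ := α / 8 * ‖w - v‖ ^ 2 with ht
  have ht0 : 0 ≤ t := by positivity
  set c : E := ((1:ℝ)/2) • w + ((1:ℝ)/2) • v + t • (-(‖f' w‖⁻¹ • f' w)) with hc
  -- membership
  have hcΩ : c ∈ Ω := by
    apply hΩ w hw v hv (1/2) (by constructor <;> norm_num) c
    have : c - (((1:ℝ)/2) • w + (1 - (1:ℝ)/2) • v) = t • (-(‖f' w‖⁻¹ • f' w)) := by
      rw [hc]; module
    rw [this, norm_smul, norm_neg, norm_smul, norm_inv, norm_norm,
      inv_mul_cancel₀ (ne_of_gt hnorm)]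
    rw [Real.norm_eq_abs, abs_of_nonneg ht0]
    rw [ht]; ring_nf; rfl
  refine ⟨c, hcΩ, ?_⟩
  -- k = ⟪v - w, -(f' w)⟫
  have hkv : k = ⟪v - w, -(f' w)⟫ := by
    rw [hk]
    apply le_antisymm
    · apply csSup_le ((hne.image _))
      rintro x ⟨u, hu, rfl⟩
      simp only [inner_neg_right, inner_sub_left, real_inner_comm]
      have := horacle u hu
      linarith [real_inner_comm u (f' w), real_inner_comm v (f' w)]
    · exact le_csSup ((hcomp.image (Continuous.inner (continuous_id.sub continuous_const) continuous_const)).bddAbove) ⟨v, hv, rfl⟩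
  -- inner product computation
  have hcw : c - w = ((1:ℝ)/2) • (v - w) + t • (-(‖f' w‖⁻¹ • f' w)) := by
    rw [hc]; module
  have hinner : ⟪c - w, f' w⟫ =
      (1/2) * ⟪v - w, f' w⟫ - t * ‖f' w‖ := by
    rw [hcw, inner_add_left, real_inner_smul_left, real_inner_smul_left,
      inner_neg_left, real_inner_smul_left, real_inner_self_eq_norm_sq]
    field_simp
    ring
  apply le_of_eq
  have hvw : ‖w - v‖ = ‖v - w‖ := norm_sub_rev w v
  rw [hinner, hkv, inner_neg_right, ht, hvw]
  ring
end

section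
/- Let E be a real inner product space, α > 0, and let Ω ⊆ E be a nonempty compact α-strongly convex set. Let f : E → ℝ be differentiable with gradient ∇f and L-smooth (L > 0). Let w ∈ Ω, let v ∈ Ω satisfy ⟨∇f(w), v⟩ ≤ ⟨∇f(w), u⟩ for all u ∈ Ω, and let k = sup_{u ∈ Ω} ⟨u − w, −∇f(w)⟩ be the Frank–Wolfe gap at w. Then there exists γ ∈ [0,1] such that f(w + γ(v − w)) ≤ f(w) − min( 1/2, α‖∇f(w)‖/(8L) )·k. -/
open RealInnerProductSpace

/-- Per-iteration decrease of Frank–Wolfe with exact line search for (possibly non-convex)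
smooth objectives over strongly convex sets: with `v` the oracle output at `w` and `k` the
Frank–Wolfe gap at `w`, there exists `γ ∈ [0,1]` with
`f(w + γ(v − w)) ≤ f(w) − min(1/2, α‖∇f(w)‖/(8L))·k`. -/
theorem frank_wolfe_nonconvex_decrease
    {E : Type*} [NormedAddCommGroup E] [InnerProductSpace ℝ E]
    {α : ℝ} (hα : 0 < α) {Ω : Set E} (hne : Ω.Nonempty) (hcomp : IsCompact Ω)
    (hΩ : StronglyConvexSet α Ω)
    (f : E → ℝ) (f' : E → E) {L : ℝ} (hL : 0 < L)
    (hdiff : ∀ x : E, HasFDerivAt f (innerSL ℝ (f' x)) x)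
    (hsmooth : ∀ x y : E, |f x - f y - ⟪f' y, x - y⟫| ≤ L / 2 * ‖x - y‖ ^ 2)
    {w : E} (hw : w ∈ Ω)
    {v : E} (hv : v ∈ Ω) (horacle : ∀ u ∈ Ω, ⟪f' w, v⟫ ≤ ⟪f' w, u⟫)
    {k : ℝ} (hk : k = sSup ((fun u => ⟪u - w, -(f' w)⟫) '' Ω)) :
    ∃ γ ∈ Set.Icc (0 : ℝ) 1,
      f (w + γ • (v - w)) ≤ f w - min (1 / 2) (α * ‖f' w‖ / (8 * L)) * k := by
  set g := f' w with hg
  set d := v - w with hd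
  set K : ℝ := ⟪d, -g⟫ with hK
  have hKe : K = ⟪g, w⟫ - ⟪g, v⟫ := by
    rw [hK, hd, inner_neg_right, inner_sub_left, real_inner_comm v g, real_inner_comm w g]
    ring
  have hbound : ∀ u ∈ Ω, ⟪u - w, -g⟫ ≤ K := by
    intro u hu
    have h1 := horacle u hu
    have h2 : ⟪u - w, -g⟫ = ⟪g, w⟫ - ⟪g, u⟫ := by
      rw [inner_neg_right, inner_sub_left, real_inner_comm u g, real_inner_comm w g]
      ring
    rw [h2, hKe]
    linarith
  have hkK : k = K := by
    rw [hk]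
    apply le_antisymm
    · apply csSup_le (hne.image _)
      rintro x ⟨u, hu, rfl⟩
      exact hbound u hu
    · exact le_csSup ⟨K, by rintro x ⟨u, hu, rfl⟩; exact hbound u hu⟩ ⟨v, hv, rfl⟩
  have hK0 : 0 ≤ K := by
    have := hbound w hw
    simpa using this
  -- smoothness bound
  have hsm : ∀ γ : ℝ, f (w + γ • d) ≤ f w - γ * K + L / 2 * γ ^ 2 * ‖d‖ ^ 2 := by
    intro γ
    have h := hsmooth (w + γ • d) w
    rw [← hg] at h
    have e1 : w + γ • d - w = γ • d := by abel
    have e2 : ⟪g, γ • d⟫ = -(γ * K) := by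
      rw [inner_smul_right, hK, inner_neg_right, real_inner_comm]
      ring
    have e3 : ‖γ • d‖ ^ 2 = γ ^ 2 * ‖d‖ ^ 2 := by
      rw [norm_smul]
      simp [mul_pow, sq_abs]
    rw [e1, e2, e3] at h
    have := (abs_le.mp h).2
    linarith
  rcases eq_or_lt_of_le hK0 with hK0' | hKpos
  · refine ⟨0, by norm_num, ?_⟩
    rw [hkK, ← hK0']
    simp
  · -- K > 0 case
    have hgne : g ≠ 0 := by
      intro h0
      rw [hK, h0] at hKpos
      simp at hKpos
    have hgpos : 0 < ‖g‖ := norm_pos_iff.mpr hgne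
    have hdne : d ≠ 0 := by
      intro h0
      rw [hK, h0] at hKpos
      simp at hKpos
    have hdpos : 0 < ‖d‖ := norm_pos_iff.mpr hdne
    -- strong convexity key bound
    have hkey : α * ‖g‖ * ‖d‖ ^ 2 ≤ 4 * K := by
      set c : ℝ := α / 8 * ‖d‖ ^ 2 / ‖g‖ with hc
      have hcpos : 0 < c := by positivity
      set y : E := (1/2 : ℝ) • v + (1/2 : ℝ) • w + c • (-g) with hy
      have hymem : y ∈ Ω := by
        apply hΩ v hv w hw (1/2) (by norm_num)
        have e1 : y - ((1/2 : ℝ) • v + (1 - 1/2 : ℝ) • w) = c • (-g) := by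
          rw [hy]; norm_num
        rw [e1]
        have e2 : ‖c • (-g)‖ = α / 8 * ‖d‖ ^ 2 := by
          rw [norm_smul, norm_neg, Real.norm_eq_abs, abs_of_pos hcpos, hc]
          field_simp
        rw [e2, ← hd]
        nlinarith [sq_nonneg ‖d‖]
      have h1 := horacle y hymem
      rw [hy] at h1
      have h2 : ⟪g, (1/2 : ℝ) • v + (1/2 : ℝ) • w + c • (-g)⟫
          = 1/2 * ⟪g, v⟫ + 1/2 * ⟪g, w⟫ - c * ‖g‖ ^ 2 := by
        rw [inner_add_right, inner_add_right, inner_smul_right, inner_smul_right,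
          inner_smul_right, inner_neg_right, real_inner_self_eq_norm_sq]
        ring
      rw [h2] at h1
      have h4 : c * ‖g‖ ^ 2 = α / 8 * ‖d‖ ^ 2 * ‖g‖ := by
        rw [hc]; field_simp
      rw [h4] at h1
      -- from h1 : ⟪g,v⟫ ≤ 1/2⟪g,v⟫+1/2⟪g,w⟫ - α/8‖d‖²‖g‖, and hKe
      nlinarith [hKe]
    rcases le_or_gt (L * ‖d‖ ^ 2) K with hcase | hcase
    · refine ⟨1, by norm_num, ?_⟩
      have h1 := hsm 1
      have h2 : min (1/2 : ℝ) (α * ‖g‖ / (8 * L)) * K ≤ 1/2 * K :=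
        mul_le_mul_of_nonneg_right (min_le_left _ _) hK0
      rw [hkK]
      nlinarith [h1, h2, hcase]
    · refine ⟨K / (L * ‖d‖ ^ 2), ⟨by positivity,
        le_of_lt ((div_lt_one (by positivity)).mpr hcase)⟩, ?_⟩
      have h1 := hsm (K / (L * ‖d‖ ^ 2))
      have heq : f w - K / (L * ‖d‖ ^ 2) * K
          + L / 2 * (K / (L * ‖d‖ ^ 2)) ^ 2 * ‖d‖ ^ 2
          = f w - K ^ 2 / (2 * L * ‖d‖ ^ 2) := by
        field_simp
        ring
      rw [heq] at h1
      have hm : min (1/2 : ℝ) (α * ‖g‖ / (8 * L)) * K ≤ α * ‖g‖ / (8 * L) * K :=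
        mul_le_mul_of_nonneg_right (min_le_right _ _) hK0
      have hstep : α * ‖g‖ / (8 * L) * K ≤ K ^ 2 / (2 * L * ‖d‖ ^ 2) := by
        rw [div_mul_eq_mul_div, div_le_div_iff₀ (by positivity) (by positivity)]
        nlinarith [mul_le_mul_of_nonneg_left hkey (by positivity : (0:ℝ) ≤ 2 * L * K)]
      rw [hkK]
      linarith
end

section
/- Let E be a real inner product space, α > 0, and let Ω ⊆ E be a nonempty compact α-strongly convex set. Let f : E → ℝ be differentiable with gradient ∇f and L-smooth (L > 0). Consider Frank–Wolfe with exact line search: w_1 ∈ Ω and, for each s ≥ 1, v_s ∈ Ω with ⟨∇f(w_s), v_s⟩ ≤ ⟨∇f(w_s), u⟩ for all u ∈ Ω, and w_{s+1} ∈ Ω with f(w_{s+1}) ≤ f(w_s + γ(v_s − w_s)) for all γ ∈ [0,1]. Let k_s = sup_{u ∈ Ω} ⟨u − w_s, −∇f(w_s)⟩ denote the Frank–Wolfe gap at w_s. If there is c > 0 with ‖∇f(w_s)‖ ≥ c for all s, then for every t ≥ 1, min_{1 ≤ s ≤ t} k_s ≤ ( f(w_1) − inf_{w ∈ Ω} f(w)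 ) / ( t · min(1/2, αc/(8L)) ). -/
open RealInnerProductSpace

set_option maxHeartbeats 1000000

/-- Deterministic core of Theorem 4: for a smooth (possibly non-convex) objective over a
compact `α`-strongly convex set, Frank–Wolfe with exact line search (with gradient norms
bounded below by `c > 0`) drives the minimum Frank–Wolfe gap over the first `t` iterations
below `(f(w₁) − inf_Ω f) / (t·min(1/2, αc/(8L)))`. -/
theorem frank_wolfe_nonconvex_O_inv_t
    {E : Type*} [NormedAddCommGroup E] [InnerProductSpace ℝ E]
    {α : ℝ} (hα : 0 < α) {Ω : Set E} (hne : Ω.Nonempty) (hcomp : IsCompact Ω)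
    (hΩ : StronglyConvexSet α Ω)
    (f : E → ℝ) (f' : E → E) {L : ℝ} (hL : 0 < L)
    (hdiff : ∀ x : E, HasFDerivAt f (innerSL ℝ (f' x)) x)
    (hsmooth : ∀ x y : E, |f x - f y - ⟪f' y, x - y⟫| ≤ L / 2 * ‖x - y‖ ^ 2)
    (w v : ℕ → E)
    (hwmem : ∀ s : ℕ, 1 ≤ s → w s ∈ Ω)
    (hvmem : ∀ s : ℕ, 1 ≤ s → v s ∈ Ω)
    (horacle : ∀ s : ℕ, 1 ≤ s → ∀ u ∈ Ω, ⟪f' (w s), v s⟫ ≤ ⟪f' (w s), u⟫)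
    (hls : ∀ s : ℕ, 1 ≤ s → ∀ γ ∈ Set.Icc (0 : ℝ) 1,
      f (w (s + 1)) ≤ f (w s + γ • (v s - w s)))
    {c : ℝ} (hc : 0 < c) (hgrad : ∀ s : ℕ, 1 ≤ s → c ≤ ‖f' (w s)‖) :
    ∀ t : ℕ, 1 ≤ t → ∃ s : ℕ, 1 ≤ s ∧ s ≤ t ∧
      sSup ((fun u => ⟪u - w s, -(f' (w s))⟫) '' Ω) ≤
        (f (w 1) - sInf (f '' Ω)) / ((t : ℝ) * min (1 / 2) (α * c / (8 * L))) := by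
  intro t ht
  set k : ℕ → ℝ := fun s => ⟪v s - w s, -(f' (w s))⟫ with hkdef
  set ρ : ℝ := min (1 / 2) (α * c / (8 * L)) with hρdef
  have hρpos : 0 < ρ := lt_min (by norm_num) (by positivity)
  have hfc : Continuous f := continuous_iff_continuousAt.mpr fun x => (hdiff x).continuousAt
  have hknn : ∀ s : ℕ, 1 ≤ s → 0 ≤ k s := by
    intro s hs
    have h := horacle s hs (w s) (hwmem s hs)
    have hcomm : ⟪v s - w s, -(f' (w s))⟫ = ⟪f' (w s), w s⟫ - ⟪f' (w s), v s⟫ := by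
      rw [inner_neg_right, inner_sub_left, real_inner_comm (v s), real_inner_comm (w s)]
      ring
    simp only [hkdef, hcomm]
    linarith
  -- key consequence of strong convexity
  have hkey : ∀ s : ℕ, 1 ≤ s → α / 8 * ‖v s - w s‖ ^ 2 * c ≤ k s / 2 := by
    intro s hs
    have hgpos : 0 < ‖f' (w s)‖ := lt_of_lt_of_le hc (hgrad s hs)
    set r : ℝ := α / 8 * ‖v s - w s‖ ^ 2 / ‖f' (w s)‖ with hrdef
    have hrnn : 0 ≤ r := by positivity
    set y : E := (1/2 : ℝ) • w s + (1/2 : ℝ) • v s + r • (-(f' (w s))) with hydef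
    have hymem : y ∈ Ω := by
      apply hΩ (w s) (hwmem s hs) (v s) (hvmem s hs) (1/2) (by norm_num) y
      have heq : y - ((1/2 : ℝ) • w s + (1 - 1/2 : ℝ) • v s) = r • (-(f' (w s))) := by
        simp only [hydef]; module
      rw [heq, norm_smul, norm_neg, Real.norm_eq_abs, abs_of_nonneg hrnn, hrdef,
        div_mul_cancel₀ _ (ne_of_gt hgpos), norm_sub_rev]
      nlinarith [sq_nonneg ‖w s - v s‖]
    have h1 := horacle s hs y hymem
    have hy2 : y - w s = (1/2 : ℝ) • (v s - w s) + r • (-(f' (w s))) := by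
      rw [hydef]; module
    have h2 : ⟪f' (w s), y⟫ - ⟪f' (w s), w s⟫ = (1/2) * ⟪f' (w s), v s - w s⟫ - r * ‖f' (w s)‖ ^ 2 := by
      have : ⟪f' (w s), y - w s⟫ = (1/2) * ⟪f' (w s), v s - w s⟫ + r * ⟪f' (w s), -(f' (w s))⟫ := by
        rw [hy2, inner_add_right, real_inner_smul_right, real_inner_smul_right]
      rw [inner_sub_right] at this
      rw [inner_neg_right, real_inner_self_eq_norm_sq] at this
      linarith
    have h3 : k s = ⟪f' (w s), w s⟫ - ⟪f' (w s), v s⟫ := by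
      simp only [hkdef]
      rw [inner_neg_right, inner_sub_left, real_inner_comm (v s), real_inner_comm (w s)]
      ring
    have h4 : ⟪f' (w s), v s - w s⟫ = -k s := by rw [h3, inner_sub_right]; ring
    -- from h1 : ⟪g, v s⟫ ≤ ⟪g, y⟫, i.e. k s ≥ ⟪g, w s⟫ - ⟪g, y⟫
    have h5 : r * ‖f' (w s)‖ ^ 2 ≤ k s / 2 := by
      have := h2
      rw [h4] at this
      nlinarith [h1, h3]
    have h6 : r * ‖f' (w s)‖ ^ 2 = α / 8 * ‖v s - w s‖ ^ 2 * ‖f' (w s)‖ := by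
      rw [hrdef]; field_simp
    have h7 : α / 8 * ‖v s - w s‖ ^ 2 * c ≤ α / 8 * ‖v s - w s‖ ^ 2 * ‖f' (w s)‖ :=
      mul_le_mul_of_nonneg_left (hgrad s hs) (by positivity)
    linarith [h6 ▸ h5]
  -- per-step decrease
  have hstep : ∀ s : ℕ, 1 ≤ s → ρ * k s ≤ f (w s) - f (w (s + 1)) := by
    intro s hs
    set γ : ℝ := min 1 (α * c / (4 * L)) with hγdef
    have hγ0 : 0 ≤ γ := le_min (by norm_num) (by positivity)
    have h1 := hls s hs γ ⟨hγ0, min_le_left _ _⟩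
    have h2 : f (w s + γ • (v s - w s)) ≤
        f (w s) + γ * ⟪f' (w s), v s - w s⟫ + L / 2 * (γ ^ 2 * ‖v s - w s‖ ^ 2) := by
      have hsm := (abs_le.mp (hsmooth (w s + γ • (v s - w s)) (w s))).2
      rw [add_sub_cancel_left, real_inner_smul_right, norm_smul, Real.norm_eq_abs,
        abs_of_nonneg hγ0, mul_pow] at hsm
      linarith
    have h4 : ⟪f' (w s), v s - w s⟫ = -k s := by
      simp only [hkdef]
      rw [inner_neg_right, inner_sub_left, inner_sub_right,
        real_inner_comm (v s), real_inner_comm (w s)]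
      ring
    have h5 : L / 2 * ‖v s - w s‖ ^ 2 ≤ 2 * L / (α * c) * k s := by
      have hk2 := hkey s hs
      have hac : 0 < α * c := by positivity
      rw [div_mul_eq_mul_div (2 * L) (α * c) (k s), le_div_iff₀ hac]
      nlinarith [mul_le_mul_of_nonneg_left hk2 hL.le]
    have hγρ : ρ ≤ γ - 2 * L / (α * c) * γ ^ 2 := by
      have hac : 0 < α * c := by positivity
      rcases le_or_gt 1 (α * c / (4 * L)) with h | h
      · have hγ1 : γ = 1 := min_eq_left h
        have h4L : 4 * L ≤ α * c := by
          rw [le_div_iff₀ (by positivity)] at h; linarith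
        have hhalf : 2 * L / (α * c) ≤ 1 / 2 := by
          rw [div_le_iff₀ hac]; linarith
        have := min_le_left (1/2 : ℝ) (α * c / (8 * L))
        rw [hγ1]; rw [hρdef]; nlinarith
      · have hγ2 : γ = α * c / (4 * L) := min_eq_right h.le
        have heq : α * c / (4 * L) - 2 * L / (α * c) * (α * c / (4 * L)) ^ 2 = α * c / (8 * L) := by
          field_simp; ring
        rw [hγ2, heq, hρdef]
        exact min_le_right _ _
    have hknns := hknn s hs
    nlinarith [mul_le_mul_of_nonneg_left h5 (sq_nonneg γ),
      mul_le_mul_of_nonneg_right hγρ hknns]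
  -- telescoping
  have htel : ∀ n : ℕ, 1 ≤ n → ∑ s ∈ Finset.Icc 1 n, ρ * k s ≤ f (w 1) - f (w (n + 1)) := by
    intro n hn
    induction n with
    | zero => omega
    | succ m ih =>
      rcases Nat.eq_zero_or_pos m with hm | hm
      · subst hm; simpa using hstep 1 le_rfl
      · rw [Finset.sum_Icc_succ_top (by omega : 1 ≤ m + 1)]
        have h1 := ih hm
        have h2 := hstep (m + 1) (by omega)
        linarith
  obtain ⟨m, hmmem, hmin⟩ := Finset.exists_min_image (Finset.Icc 1 t) k
    ⟨1, Finset.mem_Icc.mpr ⟨le_rfl, ht⟩⟩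
  obtain ⟨hm1, hm2⟩ := Finset.mem_Icc.mp hmmem
  refine ⟨m, hm1, hm2, ?_⟩
  -- sSup equals k m
  have hsup : sSup ((fun u => ⟪u - w m, -(f' (w m))⟫) '' Ω) = k m := by
    have hcont : Continuous fun u : E => ⟪u - w m, -(f' (w m))⟫ :=
      Continuous.inner (continuous_id.sub continuous_const) continuous_const
    apply le_antisymm
    · apply csSup_le (hne.image _)
      rintro x ⟨u, hu, rfl⟩
      have h := horacle m hm1 u hu
      simp only [hkdef]
      rw [inner_neg_right, inner_neg_right, inner_sub_left, inner_sub_left]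
      have e1 : ⟪u, f' (w m)⟫ = ⟪f' (w m), u⟫ := real_inner_comm _ _
      have e2 : ⟪v m, f' (w m)⟫ = ⟪f' (w m), v m⟫ := real_inner_comm _ _
      linarith
    · exact le_csSup ((hcomp.image hcont).bddAbove) ⟨v m, hvmem m hm1, rfl⟩
  rw [hsup]
  have htR : (1 : ℝ) ≤ (t : ℝ) := by exact_mod_cast ht
  have hsum : (t : ℝ) * (ρ * k m) ≤ ∑ s ∈ Finset.Icc 1 t, ρ * k s := by
    have hcard : (Finset.Icc 1 t).card = t := by rw [Nat.card_Icc]; omega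
    have := Finset.card_nsmul_le_sum (Finset.Icc 1 t) (fun s => ρ * k s) (ρ * k m)
      (fun s hsmem => mul_le_mul_of_nonneg_left (hmin s hsmem) hρpos.le)
    rw [hcard, nsmul_eq_mul] at this
    exact this
  have hInf : sInf (f '' Ω) ≤ f (w (t + 1)) :=
    csInf_le ((hcomp.image hfc).bddBelow) ⟨w (t + 1), hwmem _ (by omega), rfl⟩
  have htel' := htel t ht
  rw [le_div_iff₀ (by positivity)]
  nlinarith
end

section
/- Let E be a real inner product space and let Ω ⊆ E be a nonempty convex set of diameter at most D (i.e., ‖u − v‖ ≤ D for all u, v ∈ Ω). Let f : E → ℝ be convex, differentiable with gradient ∇f, and L-smooth (L ≥ 0). Consider standard Frank–Wolfe with predefined step sizes: w_0 ∈ Ω and, for t ≥ 1, γ_t = 2/(t+1), v_t ∈ Ω with ⟨∇f(w_{t−1}), v_t⟩ ≤ ⟨∇f(w_{t−1}), u⟩ for all u ∈ Ω, and w_t = (1−γ_t)w_{t−1} + γ_t v_t. Then for every w* ∈ Ω and every t ≥ 1, f(w_t) − f(w*) ≤ (2L/(t(t+1)))·Σ_{i=1}^{t} ‖v_i − w_{i−1}‖²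 ≤ 2LD²/(t+1). -/
open RealInnerProductSpace

set_option maxHeartbeats 1000000 in
/-- Standard `O(1/t)` guarantee for Frank–Wolfe with step sizes `γ_t = 2/(t+1)` on smooth
convex objectives over a convex set of diameter at most `D`:
`f(w_t) − f(w*) ≤ (2L/(t(t+1)))·Σ_{i=1}^{t} ‖v_i − w_{i−1}‖² ≤ 2LD²/(t+1)`. -/
theorem frank_wolfe_standard_rate
    {E : Type*} [NormedAddCommGroup E] [InnerProductSpace ℝ E]
    {Ω : Set E} (hne : Ω.Nonempty) (hΩ : Convex ℝ Ω)
    {D : ℝ} (hdiam : ∀ u ∈ Ω, ∀ x ∈ Ω, ‖u - x‖ ≤ D)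
    (f : E → ℝ) (f' : E → E) {L : ℝ} (hL : 0 ≤ L)
    (hconv : ConvexOn ℝ Set.univ f)
    (hdiff : ∀ x : E, HasFDerivAt f (innerSL ℝ (f' x)) x)
    (hsmooth : ∀ x y : E, |f x - f y - ⟪f' y, x - y⟫| ≤ L / 2 * ‖x - y‖ ^ 2)
    (w v : ℕ → E) (hw0 : w 0 ∈ Ω)
    (hvmem : ∀ t : ℕ, 1 ≤ t → v t ∈ Ω)
    (horacle : ∀ t : ℕ, 1 ≤ t → ∀ u ∈ Ω,
      ⟪f' (w (t - 1)), v t⟫ ≤ ⟪f' (w (t - 1)), u⟫)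
    (hw : ∀ t : ℕ, 1 ≤ t →
      w t = (1 - 2 / ((t : ℝ) + 1)) • w (t - 1) + (2 / ((t : ℝ) + 1)) • v t) :
    ∀ wstar ∈ Ω, ∀ t : ℕ, 1 ≤ t →
      f (w t) - f wstar ≤
          2 * L / ((t : ℝ) * ((t : ℝ) + 1)) * ∑ i ∈ Finset.Icc 1 t, ‖v i - w (i - 1)‖ ^ 2 ∧
        2 * L / ((t : ℝ) * ((t : ℝ) + 1)) * ∑ i ∈ Finset.Icc 1 t, ‖v i - w (i - 1)‖ ^ 2 ≤
          2 * L * D ^ 2 / ((t : ℝ) + 1) := by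
  -- gradient inequality from convexity + smoothness
  have grad : ∀ x y : E, ⟪f' x, y - x⟫ ≤ f y - f x := by
    intro x y
    by_contra hcon
    push_neg at hcon
    set c : ℝ := ⟪f' x, y - x⟫ - (f y - f x) with hc
    have hc0 : 0 < c := by simp only [hc]; linarith
    set K : ℝ := L / 2 * ‖y - x‖ ^ 2 with hK
    have hK0 : 0 ≤ K := by positivity
    have key : ∀ s : ℝ, 0 < s → s ≤ 1 → c ≤ K * s := by
      intro s hs hs1
      have hcv := hconv.2 (Set.mem_univ x) (Set.mem_univ y)
        (by linarith : (0:ℝ) ≤ 1 - s) hs.le (by ring)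
      have hsm := (abs_le.mp (hsmooth ((1 - s) • x + s • y) x)).1
      have heq : (1 - s) • x + s • y - x = s • (y - x) := by
        rw [smul_sub, sub_smul, one_smul]; abel
      rw [heq, real_inner_smul_right, norm_smul, Real.norm_eq_abs,
        abs_of_pos hs, mul_pow] at hsm
      simp only [smul_eq_mul] at hcv
      have hmain : s * c ≤ s * (K * s) := by
        simp only [hc, hK]; nlinarith [hcv, hsm]
      exact (mul_le_mul_iff_right₀ hs).mp hmain
    -- choose small s to contradict 0 < c
    rcases le_total 1 (c / (K + 1)) with hcase | hcase
    · have := key 1 one_pos le_rfl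
      have : c ≤ K := by linarith
      have hKc : K + 1 ≤ c := by
        rwa [le_div_iff₀ (by linarith : (0:ℝ) < K + 1), one_mul] at hcase
      linarith
    · have hspos : 0 < c / (K + 1) := by positivity
      have := key _ hspos hcase
      have hlt : K * (c / (K + 1)) < c := by
        rw [mul_div_assoc']
        rw [div_lt_iff₀ (by linarith : (0:ℝ) < K + 1)]
        nlinarith
      linarith
  intro wstar hws
  have hD0 : 0 ≤ D := by
    have := hdiam _ hw0 _ hw0
    simpa using le_trans (norm_nonneg _) this
  -- all iterates stay in Ω
  have wmem : ∀ t : ℕ, w t ∈ Ω := by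
    intro t
    induction t with
    | zero => exact hw0
    | succ n ih =>
      have h1 : 1 ≤ n + 1 := Nat.le_add_left 1 n
      have hcast : ((n + 1 : ℕ) : ℝ) + 1 = (n : ℝ) + 2 := by push_cast; ring
      rw [hw (n + 1) h1]
      simp only [Nat.add_sub_cancel, hcast]
      have hpos : (0:ℝ) < (n : ℝ) + 2 := by positivity
      refine hΩ ih (hvmem (n + 1) h1) ?_ ?_ (by ring)
      · have : 2 / ((n : ℝ) + 2) ≤ 1 := by
          rw [div_le_one hpos]; linarith [Nat.cast_nonneg (α := ℝ) n]
        linarith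
      · positivity
  -- key recursion, in multiplied form
  have main : ∀ t : ℕ, (t : ℝ) * ((t : ℝ) + 1) * (f (w t) - f wstar) ≤
      2 * L * ∑ i ∈ Finset.Icc 1 t, ‖v i - w (i - 1)‖ ^ 2 := by
    intro t
    induction t with
    | zero => simp
    | succ n ih =>
      have h1 : 1 ≤ n + 1 := Nat.le_add_left 1 n
      have hcast : ((n + 1 : ℕ) : ℝ) + 1 = (n : ℝ) + 2 := by push_cast; ring
      have hnr0 : (0:ℝ) ≤ (n : ℝ) := Nat.cast_nonneg n
      have hpos : (0:ℝ) < (n : ℝ) + 2 := by positivity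
      obtain ⟨γ, hγ⟩ : ∃ g : ℝ, g = 2 / ((n : ℝ) + 2) := ⟨_, rfl⟩
      have hγ0 : 0 < γ := by rw [hγ]; positivity
      have hγ1 : γ ≤ 1 := by rw [hγ, div_le_one hpos]; linarith
      have hB0 : 0 ≤ ‖v (n + 1) - w n‖ ^ 2 := by positivity
      have hdiffw : w (n + 1) - w n = γ • (v (n + 1) - w n) := by
        have h := hw (n + 1) h1
        simp only [Nat.add_sub_cancel, hcast] at h
        rw [h, ← hγ, smul_sub, sub_smul, one_smul]; abel
      have hsm := (abs_le.mp (hsmooth (w (n + 1)) (w n))).2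
      rw [hdiffw, real_inner_smul_right, norm_smul, Real.norm_eq_abs,
        abs_of_pos hγ0, mul_pow] at hsm
      have hor := horacle (n + 1) h1 wstar hws
      simp only [Nat.add_sub_cancel] at hor
      have hgr := grad (w n) wstar
      have hI : ⟪f' (w n), v (n + 1) - w n⟫ ≤ f wstar - f (w n) := by
        have e1 : ⟪f' (w n), v (n + 1) - w n⟫
            = ⟪f' (w n), v (n + 1)⟫ - ⟪f' (w n), w n⟫ := inner_sub_right _ _ _
        have e2 : ⟪f' (w n), wstar - w n⟫
            = ⟪f' (w n), wstar⟫ - ⟪f' (w n), w n⟫ := inner_sub_right _ _ _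
        rw [e1]; rw [e2] at hgr; linarith
      have hstep : f (w (n + 1)) - f wstar ≤
          (1 - γ) * (f (w n) - f wstar) + L / 2 * γ ^ 2 * ‖v (n + 1) - w n‖ ^ 2 := by
        have hmul : γ * ⟪f' (w n), v (n + 1) - w n⟫ ≤ γ * (f wstar - f (w n)) :=
          mul_le_mul_of_nonneg_left hI hγ0.le
        linarith [hsm, hmul]
      have h2 : ((n : ℝ) + 1) * ((n : ℝ) + 2) * (f (w (n + 1)) - f wstar) ≤
          ((n : ℝ) + 1) * ((n : ℝ) + 2) * ((1 - γ) * (f (w n) - f wstar)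
            + L / 2 * γ ^ 2 * ‖v (n + 1) - w n‖ ^ 2) :=
        mul_le_mul_of_nonneg_left hstep (by positivity)
      have hexp : ((n : ℝ) + 1) * ((n : ℝ) + 2) * ((1 - γ) * (f (w n) - f wstar)
            + L / 2 * γ ^ 2 * ‖v (n + 1) - w n‖ ^ 2)
          = (n : ℝ) * ((n : ℝ) + 1) * (f (w n) - f wstar)
            + 2 * L * ‖v (n + 1) - w n‖ ^ 2 * (((n : ℝ) + 1) / ((n : ℝ) + 2)) := by
        rw [hγ]; field_simp; ring
      have hfrac : ((n : ℝ) + 1) / ((n : ℝ) + 2) ≤ 1 := by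
        rw [div_le_one hpos]; linarith
      have h3 : 2 * L * ‖v (n + 1) - w n‖ ^ 2 * (((n : ℝ) + 1) / ((n : ℝ) + 2))
          ≤ 2 * L * ‖v (n + 1) - w n‖ ^ 2 * 1 :=
        mul_le_mul_of_nonneg_left hfrac (by positivity)
      rw [Finset.sum_Icc_succ_top h1, mul_add]
      simp only [Nat.add_sub_cancel]
      push_cast
      nlinarith [h2, hexp, h3, ih]
  intro t ht
  have ht1 : (1:ℝ) ≤ (t : ℝ) := by exact_mod_cast ht
  have htpos : (0:ℝ) < (t : ℝ) * ((t : ℝ) + 1) := by nlinarith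
  constructor
  · rw [div_mul_eq_mul_div, le_div_iff₀ htpos]
    linarith [main t]
  · have hsum : ∑ i ∈ Finset.Icc 1 t, ‖v i - w (i - 1)‖ ^ 2 ≤ (t : ℝ) * D ^ 2 := by
      have hbound : ∀ i ∈ Finset.Icc 1 t, ‖v i - w (i - 1)‖ ^ 2 ≤ D ^ 2 := by
        intro i hi
        have hi1 : 1 ≤ i := (Finset.mem_Icc.mp hi).1
        have := hdiam _ (hvmem i hi1) _ (wmem (i - 1))
        exact pow_le_pow_left₀ (norm_nonneg _) this 2
      calc ∑ i ∈ Finset.Icc 1 t, ‖v i - w (i - 1)‖ ^ 2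
          ≤ ∑ i ∈ Finset.Icc 1 t, D ^ 2 := Finset.sum_le_sum hbound
        _ = (t : ℝ) * D ^ 2 := by
            rw [Finset.sum_const, Nat.card_Icc, Nat.add_sub_cancel, nsmul_eq_mul]
    have h4 : 2 * L / ((t : ℝ) * ((t : ℝ) + 1)) * ∑ i ∈ Finset.Icc 1 t, ‖v i - w (i - 1)‖ ^ 2
        ≤ 2 * L / ((t : ℝ) * ((t : ℝ) + 1)) * ((t : ℝ) * D ^ 2) :=
      mul_le_mul_of_nonneg_left hsum (by positivity)
    have heq : 2 * L / ((t : ℝ) * ((t : ℝ) + 1)) * ((t : ℝ) * D ^ 2)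
        = 2 * L * D ^ 2 / ((t : ℝ) + 1) := by
      have ht0 : (t : ℝ) ≠ 0 := by linarith
      have ht2 : (t : ℝ) + 1 ≠ 0 := by linarith
      field_simp
    rw [← heq]; exact h4
end
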